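/- arXiv:1707.06880 — 6 statements merged into one kernel-verified Lean document; each statement's English description precedes it below -/
import Mathlib

section
/- Let (X,B,η) be a finite, complete, separable, non-atomic measure space, let U_ad = {u ∈ L^∞(X) : α ≤ u ≤ β a.e.} with α < β, and let J : U_ad → ℝ be weak* sequentially continuous from L^∞(X) to ℝ. Suppose ū ∈ U_ad is a local minimizer of J with respect to the L^1(X) norm and ū is not bang-bang, i.e., the set {x : α < ū(x) < β} has positive measure. Then there exists δ₀ > 0 such that for every δ ∈ (0, δ₀] and every ε > 0 there exists u ∈ U_ad with ‖u − ū‖_{L^1(X)} = δ and J(u) ≤ J(ū) + ε. -/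
open MeasureTheory Filter Topology
open scoped ENNReal

/-- The admissible set `U_ad = {u ∈ L^∞(X) : α ≤ u ≤ β a.e.}`. -/
def Uad {X : Type*} [MeasurableSpace X] (μ : Measure X) (α β : ℝ) : Set (X → ℝ) :=
  {u | Measurable u ∧ ∀ᵐ x ∂μ, α ≤ u x ∧ u x ≤ β}

/-- In a nonatomic finite measure space, any set of positive measure has subsets of
arbitrarily small positive measure. -/
lemma exists_small_subset {X : Type*} [MeasurableSpace X] (μ : Measure X) [IsFiniteMeasure μ]
    (hna : ∀ A : Set X, MeasurableSet A → 0 < μ A →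
      ∃ C, C ⊆ A ∧ MeasurableSet C ∧ 0 < μ C ∧ μ C < μ A)
    (P : Set X) (hP : MeasurableSet P) (hP0 : 0 < μ P) (ε : ℝ≥0∞) (hε : 0 < ε) :
    ∃ C, C ⊆ P ∧ MeasurableSet C ∧ 0 < μ C ∧ μ C < ε := by
  have hna' : ∀ A : Set X, ∃ C : Set X, MeasurableSet A → 0 < μ A →
      C ⊆ A ∧ MeasurableSet C ∧ 0 < μ C ∧ μ C < μ A := by
    intro A
    by_cases h1 : MeasurableSet A
    · by_cases h2 : 0 < μ A
      · obtain ⟨C, hC⟩ := hna A h1 h2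
        exact ⟨C, fun _ _ => hC⟩
      · exact ⟨∅, fun _ h => absurd h h2⟩
    · exact ⟨∅, fun h => absurd h h1⟩
  choose f hf using hna'
  set D : ℕ → Set X := fun k => f^[k] P with hD
  have key : ∀ k, (MeasurableSet (D k) ∧ D k ⊆ P ∧ 0 < μ (D k)) ∧
      (D (k+1) ⊆ D k ∧ μ (D (k+1)) < μ (D k)) := by
    intro k
    induction k with
    | zero =>
      have h0 : D 0 = P := rfl
      have h1 : D 1 = f P := rfl
      obtain ⟨hs, hm, hpos, hlt⟩ := hf P hP hP0
      exact ⟨⟨hP, subset_rfl, hP0⟩, by rw [h0, h1]; exact ⟨hs, hlt⟩⟩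
    | succ k ih =>
      obtain ⟨⟨hmk, hsub, hpos⟩, hss, hlt⟩ := ih
      have hDs : D (k+1) = f (D k) := Function.iterate_succ_apply' f k P
      have hDss : D (k+2) = f (D (k+1)) := Function.iterate_succ_apply' f (k+1) P
      have hmk1 : MeasurableSet (D (k+1)) := by
        rw [hDs]; exact (hf (D k) hmk hpos).2.1
      have hpos1 : 0 < μ (D (k+1)) := by
        rw [hDs]; exact (hf (D k) hmk hpos).2.2.1
      obtain ⟨hs2, hm2, hpos2, hlt2⟩ := hf (D (k+1)) hmk1 hpos1
      exact ⟨⟨hmk1, hss.trans hsub, hpos1⟩, by rw [hDss]; exact ⟨hs2, hlt2⟩⟩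
  have hmeas : ∀ k, MeasurableSet (D k) := fun k => (key k).1.1
  have hanti : Antitone D := antitone_nat_of_succ_le fun k => (key k).2.1
  set L : ℝ≥0∞ := ⨅ k, μ (D k) with hL
  have hDinf : μ (⋂ k, D k) = L := hanti.measure_iInter (fun k => (hmeas k).nullMeasurableSet)
    ⟨0, measure_ne_top μ _⟩
  have hLfin : L ≠ ∞ := by
    refine ne_top_of_le_ne_top (measure_ne_top μ (D 0)) (iInf_le _ 0)
  obtain ⟨k, hk⟩ : ∃ k, μ (D k) < L + ε := by
    have : L < L + ε := ENNReal.lt_add_right hLfin hε.ne'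
    simpa [hL] using (iInf_lt_iff.1 this)
  refine ⟨D k \ ⋂ j, D j, fun x hx => (key k).1.2.1 hx.1, (hmeas k).diff (MeasurableSet.iInter hmeas), ?_, ?_⟩
  · have hsub : (⋂ j, D j) ⊆ D k := Set.iInter_subset _ k
    rw [measure_diff hsub (MeasurableSet.iInter hmeas).nullMeasurableSet (by rw [hDinf]; exact hLfin), hDinf]
    have : L < μ (D k) := lt_of_le_of_lt (iInf_le _ (k+1)) (key k).2.2
    exact tsub_pos_of_lt this
  · have hsub : (⋂ j, D j) ⊆ D k := Set.iInter_subset _ k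
    rw [measure_diff hsub (MeasurableSet.iInter hmeas).nullMeasurableSet (by rw [hDinf]; exact hLfin), hDinf]
    have hle : L ≤ μ (D k) := iInf_le (fun j => μ (D j)) k
    exact ENNReal.sub_lt_of_lt_add hle (by rwa [add_comm] at hk)


/-- Sierpiński: a nonatomic finite measure attains every intermediate value on subsets. -/
lemma exists_subset_measure_eq' {X : Type*} [MeasurableSpace X] (μ : Measure X) [IsFiniteMeasure μ]
    (hna : ∀ A : Set X, MeasurableSet A → 0 < μ A →
      ∃ C, C ⊆ A ∧ MeasurableSet C ∧ 0 < μ C ∧ μ C < μ A)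
    (T : Set X) (hT : MeasurableSet T) (v : ℝ≥0∞) (hv : v ≤ μ T) :
    ∃ B, B ⊆ T ∧ MeasurableSet B ∧ μ B = v := by
  have hvfin : v ≠ ∞ := ne_top_of_le_ne_top (measure_ne_top μ T) hv
  -- a greedy step function
  have hstep : ∀ B : Set X, ∃ C : Set X, MeasurableSet B → B ⊆ T → μ B ≤ v →
      (C ⊆ T \ B ∧ MeasurableSet C ∧ μ B + μ C ≤ v ∧
        ∀ D, D ⊆ T \ B → MeasurableSet D → μ B + μ D ≤ v → μ D ≤ 2 * μ C) := by
    intro B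
    by_cases hB : MeasurableSet B ∧ B ⊆ T ∧ μ B ≤ v
    · obtain ⟨hBm, hBT, hBv⟩ := hB
      set Sc : Set ℝ≥0∞ := {m | ∃ D, D ⊆ T \ B ∧ MeasurableSet D ∧ μ B + μ D ≤ v ∧ μ D = m}
        with hSc
      have h0 : (0:ℝ≥0∞) ∈ Sc := ⟨∅, Set.empty_subset _, MeasurableSet.empty, by simpa, by simp⟩
      set s := sSup Sc with hs
      have hsle : s ≤ v := by
        refine sSup_le fun m hm => ?_
        obtain ⟨D, _, _, hDv, hDm⟩ := hm
        exact hDm ▸ le_trans le_add_self hDv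
      rcases eq_or_lt_of_le (zero_le : (0:ℝ≥0∞) ≤ s) with hs0 | hs0
      · refine ⟨∅, fun _ _ _ => ⟨Set.empty_subset _, MeasurableSet.empty, by simpa, ?_⟩⟩
        intro D hD1 hD2 hD3
        have : μ D ≤ s := le_sSup ⟨D, hD1, hD2, hD3, rfl⟩
        simp [← hs0] at this ⊢
        simp [this]
      · have hsfin : s ≠ ∞ := ne_top_of_le_ne_top hvfin hsle
        have hhalf : s / 2 < s := ENNReal.half_lt_self hs0.ne' hsfin
        obtain ⟨m, hmS, hmgt⟩ := lt_sSup_iff.1 hhalf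
        obtain ⟨D, hD1, hD2, hD3, hDm⟩ := hmS
        refine ⟨D, fun _ _ _ => ⟨hD1, hD2, hD3, ?_⟩⟩
        intro D' h1 h2 h3
        have hD'le : μ D' ≤ s := le_sSup ⟨D', h1, h2, h3, rfl⟩
        have : s ≤ 2 * μ D := by
          calc s = 2 * (s / 2) := by
                rw [ENNReal.mul_div_cancel' (by norm_num) (by norm_num)]
            _ ≤ 2 * μ D := by
                gcongr
                exact le_of_lt (hDm ▸ hmgt)
        exact hD'le.trans this
    · exact ⟨∅, fun h1 h2 h3 => absurd ⟨h1, h2, h3⟩ hB⟩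
  choose step hstepp using hstep
  set F : ℕ → Set X := fun n => Nat.rec ∅ (fun _ B => B ∪ step B) n with hF
  have hFsucc : ∀ k, F (k+1) = F k ∪ step (F k) := fun k => rfl
  have key : ∀ k, MeasurableSet (F k) ∧ F k ⊆ T ∧ μ (F k) ≤ v := by
    intro k
    induction k with
    | zero =>
      have h0 : F 0 = ∅ := rfl
      rw [h0]
      exact ⟨MeasurableSet.empty, Set.empty_subset _, by simp⟩
    | succ k ih =>
      obtain ⟨h1, h2, h3⟩ := ih
      obtain ⟨c1, c2, c3, _⟩ := hstepp (F k) h1 h2 h3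
      rw [hFsucc]
      refine ⟨h1.union c2, Set.union_subset h2 (c1.trans Set.diff_subset), ?_⟩
      calc μ (F k ∪ step (F k)) ≤ μ (F k) + μ (step (F k)) := measure_union_le _ _
        _ ≤ v := c3
  have hdisj : ∀ k, μ (F (k+1)) = μ (F k) + μ (step (F k)) := by
    intro k
    obtain ⟨h1, h2, h3⟩ := key k
    obtain ⟨c1, c2, _, _⟩ := hstepp (F k) h1 h2 h3
    rw [hFsucc, measure_union _ c2]
    exact Set.disjoint_left.2 fun x hx hx2 => (c1 hx2).2 hx
  have hmono : Monotone F := monotone_nat_of_le_succ fun k => by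
    rw [hFsucc]; exact Set.subset_union_left
  set B := ⋃ k, F k with hB
  have hBm : MeasurableSet B := MeasurableSet.iUnion fun k => (key k).1
  have hBT : B ⊆ T := Set.iUnion_subset fun k => (key k).2.1
  have hBμ : μ B = ⨆ k, μ (F k) := hmono.measure_iUnion
  have hBle : μ B ≤ v := hBμ ▸ iSup_le fun k => (key k).2.2
  rcases eq_or_lt_of_le hBle with he | hlt
  · exact ⟨B, hBT, hBm, he⟩
  exfalso
  -- find a small positive subset of T \ B
  have hTBm : MeasurableSet (T \ B) := hT.diff hBm
  have hTBpos : 0 < μ (T \ B) := by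
    rw [measure_diff hBT hBm.nullMeasurableSet (measure_ne_top μ B)]
    exact tsub_pos_of_lt (lt_of_lt_of_le hlt hv)
  obtain ⟨C, hC1, hC2, hC3, hC4⟩ := exists_small_subset μ hna (T \ B) hTBm hTBpos (v - μ B)
    (tsub_pos_of_lt hlt)
  have hCv : μ B + μ C ≤ v := by
    calc μ B + μ C ≤ μ B + (v - μ B) := add_le_add le_rfl hC4.le
      _ = v := add_tsub_cancel_of_le hBle
  -- C is a candidate at every stage
  have hCk : ∀ k, μ C ≤ 2 * μ (step (F k)) := by
    intro k
    obtain ⟨h1, h2, h3⟩ := key k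
    obtain ⟨_, _, _, c4⟩ := hstepp (F k) h1 h2 h3
    have hFkB : μ (F k) ≤ μ B := measure_mono (hB ▸ Set.subset_iUnion F k)
    refine c4 C (fun x hx => ⟨(hC1 hx).1, fun hxF => (hC1 hx).2 (Set.mem_iUnion.2 ⟨k, hxF⟩)⟩)
      hC2 (le_trans (add_le_add_left hFkB _) hCv)
  have hgrow : ∀ k : ℕ, (k : ℝ≥0∞) * (μ C / 2) ≤ μ (F k) := by
    intro k
    induction k with
    | zero => simp
    | succ k ih =>
      have hstepge : μ C / 2 ≤ μ (step (F k)) :=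
        ENNReal.div_le_of_le_mul' (hCk k)
      calc ((k+1 : ℕ) : ℝ≥0∞) * (μ C / 2) = (k : ℝ≥0∞) * (μ C / 2) + μ C / 2 := by
            push_cast; ring
        _ ≤ μ (F k) + μ (step (F k)) := add_le_add ih hstepge
        _ = μ (F (k+1)) := (hdisj k).symm
  have hc2pos : 0 < μ C / 2 := ENNReal.div_pos hC3.ne' (by norm_num)
  have hc2fin : μ C / 2 ≠ ∞ := by
    refine ne_top_of_le_ne_top (measure_ne_top μ C) ?_
    exact ENNReal.half_le_self
  obtain ⟨n, hn⟩ : ∃ n : ℕ, v / (μ C / 2) < n := ENNReal.exists_nat_gt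
    (by
      refine ne_top_of_le_ne_top ?_ (le_refl _)
      exact ENNReal.div_lt_top hvfin hc2pos.ne' |>.ne)
  have : v < (n : ℝ≥0∞) * (μ C / 2) := by
    rw [← ENNReal.div_lt_iff (Or.inl hc2pos.ne') (Or.inl hc2fin)]
    exact hn
  exact absurd ((hgrow n).trans (key n).2.2) (not_le.2 this)


lemma half_inter {X : Type*} [MeasurableSpace X] (μ : Measure X) {ι : Type*} [Fintype ι]
    (t h : ι → Set X) (htm : ∀ i, MeasurableSet (t i)) (hd : Pairwise (Function.onFun Disjoint t))
    (hsub : ∀ i, h i ⊆ t i) (hhm : ∀ i, MeasurableSet (h i)) (hhμ : ∀ i, μ (h i) = μ (t i) / 2)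
    (W : Set X) (hWm : MeasurableSet W) (hcomp : ∀ i, t i ⊆ W ∨ Disjoint (t i) W) :
    μ ((⋃ i, h i) ∩ W) = μ ((⋃ i, t i) ∩ W) / 2 := by
  have hdh : Pairwise (Function.onFun Disjoint fun i => h i ∩ W) := by
    intro i j hij
    exact Set.disjoint_left.2 fun x hxi hxj =>
      Set.disjoint_left.1 (hd hij) (hsub i hxi.1) (hsub j hxj.1)
  have hdt : Pairwise (Function.onFun Disjoint fun i => t i ∩ W) := by
    intro i j hij
    exact Set.disjoint_left.2 fun x hxi hxj =>
      Set.disjoint_left.1 (hd hij) hxi.1 hxj.1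
  have e1 : (⋃ i, h i) ∩ W = ⋃ i, h i ∩ W := by rw [Set.iUnion_inter]
  have e2 : (⋃ i, t i) ∩ W = ⋃ i, t i ∩ W := by rw [Set.iUnion_inter]
  rw [e1, e2, measure_iUnion hdh fun i => (hhm i).inter hWm,
    measure_iUnion hdt fun i => (htm i).inter hWm, tsum_fintype, tsum_fintype]
  calc ∑ b : ι, μ (h b ∩ W) = ∑ b : ι, μ (t b ∩ W) / 2 := by
        refine Finset.sum_congr rfl fun i _ => ?_
        rcases hcomp i with hc | hc
        · rw [Set.inter_eq_left.2 ((hsub i).trans hc), Set.inter_eq_left.2 hc, hhμ i]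
        · rw [Set.disjoint_iff_inter_eq_empty.1 (hc.mono_left (hsub i)),
            Set.disjoint_iff_inter_eq_empty.1 hc]
          simp
    _ = (∑ b : ι, μ (t b ∩ W)) / 2 := by
        simp only [div_eq_mul_inv]
        rw [← Finset.sum_mul]


section main
variable {X : Type*} [MeasurableSpace X] (μ : Measure X) [IsFiniteMeasure μ]

/-- The oscillation construction: on a measurable set `A'`, there is a sequence of
`±1`-valued (on `A'`) functions `σ k` converging to `0` weakly-* in `L^∞`. -/
theorem exists_oscillation
    (hseparable : ∃ S : ℕ → Set X, (∀ n, MeasurableSet (S n)) ∧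
      ∀ A : Set X, MeasurableSet A → ∀ ε : ℝ≥0∞, 0 < ε →
        ∃ n, μ ((A \ S n) ∪ (S n \ A)) < ε)
    (hnonatomic : ∀ A : Set X, MeasurableSet A → 0 < μ A →
      ∃ C, C ⊆ A ∧ MeasurableSet C ∧ 0 < μ C ∧ μ C < μ A)
    (A' : Set X) (hA'm : MeasurableSet A') :
    ∃ σ : ℕ → X → ℝ, (∀ k, Measurable (σ k)) ∧
      (∀ k x, |σ k x| = A'.indicator (fun _ => (1:ℝ)) x) ∧
      (∀ w : X → ℝ, Integrable w μ →
        Tendsto (fun k => ∫ x, σ k x * w x ∂μ) atTop (𝓝 0)) := by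
  obtain ⟨S, hSm, hSapp⟩ := hseparable
  -- the dyadic-type partition of `A'` generated by `S 0, …, S (k-1)`
  set T : ∀ k : ℕ, (Fin k → Bool) → Set X :=
    fun k f => A' ∩ ⋂ i, (if f i then S i.1 else (S i.1)ᶜ) with hT
  have hTm : ∀ k f, MeasurableSet (T k f) := by
    intro k f
    refine hA'm.inter (MeasurableSet.iInter fun i => ?_)
    by_cases hfi : f i <;> simp [hfi, hSm i.1, (hSm i.1).compl]
  have hTdisj : ∀ k, Pairwise (Function.onFun Disjoint (T k)) := by
    intro k f g hfg
    obtain ⟨i, hi⟩ := Function.ne_iff.1 hfg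
    refine Set.disjoint_left.2 fun x hxf hxg => ?_
    have h1 := Set.mem_iInter.1 hxf.2 i
    have h2 := Set.mem_iInter.1 hxg.2 i
    by_cases hb : f i = true <;> by_cases hb' : g i = true
    · exact hi (hb.trans hb'.symm)
    · rw [if_pos hb] at h1; rw [if_neg hb'] at h2; exact h2 h1
    · rw [if_neg hb] at h1; rw [if_pos hb'] at h2; exact h1 h2
    · rw [Bool.not_eq_true] at hb hb'; exact hi (hb.trans hb'.symm)
  have hTunion : ∀ k, (⋃ f, T k f) = A' := by
    intro k
    refine Set.Subset.antisymm (Set.iUnion_subset fun f x hx => hx.1) fun x hx => ?_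
    classical
    refine Set.mem_iUnion.2 ⟨fun i => decide (x ∈ S i.1), hx, Set.mem_iInter.2 fun i => ?_⟩
    by_cases hxS : x ∈ S i.1 <;> simp [hxS]
  have hTcomp : ∀ k n, n < k → ∀ f, T k f ⊆ S n ∨ Disjoint (T k f) (S n) := by
    intro k n hn f
    by_cases hb : f ⟨n, hn⟩ = true
    · refine Or.inl fun x hx => ?_
      have h := Set.mem_iInter.1 hx.2 ⟨n, hn⟩
      rw [if_pos hb] at h
      exact h
    · refine Or.inr (Set.disjoint_left.2 fun x hx hxS => ?_)
      have h := Set.mem_iInter.1 hx.2 ⟨n, hn⟩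
      rw [if_neg hb] at h
      exact h hxS
  -- halves of the partition cells
  have hHex : ∀ (k : ℕ) (f : Fin k → Bool), ∃ H, H ⊆ T k f ∧ MeasurableSet H ∧
      μ H = μ (T k f) / 2 :=
    fun k f => exists_subset_measure_eq' μ hnonatomic _ (hTm k f) _ ENNReal.half_le_self
  choose H hH1 hH2 hH3 using hHex
  set G : ℕ → Set X := fun k => ⋃ f, H k f with hG
  have hGm : ∀ k, MeasurableSet (G k) := fun k => MeasurableSet.iUnion fun f => hH2 k f
  have hGA' : ∀ k, G k ⊆ A' := fun k =>
    Set.iUnion_subset fun f => (hH1 k f).trans fun x hx => hx.1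
  have hkey : ∀ (k : ℕ) (W : Set X), MeasurableSet W →
      (∀ f, T k f ⊆ W ∨ Disjoint (T k f) W) → μ (G k ∩ W) = μ (A' ∩ W) / 2 := by
    intro k W hWm hcomp
    have := half_inter μ (T k) (H k) (hTm k) (hTdisj k) (hH1 k) (hH2 k) (hH3 k) W hWm hcomp
    rwa [hTunion k] at this
  -- the oscillating functions
  set σ : ℕ → X → ℝ := fun k x => (G k).indicator (fun _ => (1:ℝ)) x -
    (A' \ G k).indicator (fun _ => (1:ℝ)) x with hσ
  have hσmeas : ∀ k, Measurable (σ k) := fun k =>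
    ((measurable_const.indicator (hGm k)).sub
      (measurable_const.indicator (hA'm.diff (hGm k))))
  have hσabs : ∀ k x, |σ k x| = A'.indicator (fun _ => (1:ℝ)) x := by
    intro k x
    by_cases hxG : x ∈ G k
    · have hxA : x ∈ A' := hGA' k hxG
      simp [hσ, hxG, hxA, Set.indicator_of_mem, Set.indicator_of_notMem]
    · by_cases hxA : x ∈ A'
      · have : x ∈ A' \ G k := ⟨hxA, hxG⟩
        simp [hσ, hxG, hxA, this]
      · have : x ∉ A' \ G k := fun h => hxA h.1
        simp [hσ, hxG, hxA, this]
  have hσbd : ∀ k x, |σ k x| ≤ 1 := by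
    intro k x
    rw [hσabs k x]
    by_cases hxA : x ∈ A' <;> simp [hxA]
  have hσint : ∀ k, Integrable (σ k) μ :=
    fun k => ((integrable_const (1:ℝ)).indicator (hGm k)).sub
      ((integrable_const (1:ℝ)).indicator (hA'm.diff (hGm k)))
  -- vanishing of set integrals on compatible sets
  have hzero : ∀ (k : ℕ) (W : Set X), MeasurableSet W →
      (∀ f, T k f ⊆ W ∨ Disjoint (T k f) W) → ∫ x in W, σ k x ∂μ = 0 := by
    intro k W hWm hcomp
    have hIG : ∫ x in W, (G k).indicator (fun _ => (1:ℝ)) x ∂μ = (μ (G k ∩ W)).toReal := by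
      rw [integral_indicator_const (1:ℝ) (hGm k), measureReal_restrict_apply (hGm k), smul_eq_mul,
        mul_one, measureReal_def]
    have hID : ∫ x in W, (A' \ G k).indicator (fun _ => (1:ℝ)) x ∂μ
        = (μ ((A' \ G k) ∩ W)).toReal := by
      rw [integral_indicator_const (1:ℝ) (hA'm.diff (hGm k)),
        measureReal_restrict_apply (hA'm.diff (hGm k)), smul_eq_mul, mul_one, measureReal_def]
    have hint1 : Integrable ((G k).indicator (fun _ => (1:ℝ))) (μ.restrict W) :=
      ((integrable_const (1:ℝ)).indicator (hGm k)).restrict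
    have hint2 : Integrable ((A' \ G k).indicator (fun _ => (1:ℝ))) (μ.restrict W) :=
      ((integrable_const (1:ℝ)).indicator (hA'm.diff (hGm k))).restrict
    have hsplit : ∫ x in W, σ k x ∂μ = (μ (G k ∩ W)).toReal - (μ ((A' \ G k) ∩ W)).toReal := by
      rw [hσ]
      rw [integral_sub hint1 hint2, hIG, hID]
    have hmeq : μ ((A' \ G k) ∩ W) = μ (G k ∩ W) := by
      have hset : (A' \ G k) ∩ W = (A' ∩ W) \ (G k ∩ W) := by
        ext x; simp only [Set.mem_inter_iff, Set.mem_diff]; tauto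
      rw [hset, measure_diff (Set.inter_subset_inter_left W (hGA' k))
        ((hGm k).inter hWm).nullMeasurableSet (measure_ne_top μ _), hkey k W hWm hcomp,
        ENNReal.sub_half (measure_ne_top μ _)]
    rw [hsplit, hmeq, sub_self]
  -- convergence of set integrals for arbitrary measurable sets
  have hInd : ∀ A : Set X, MeasurableSet A →
      Tendsto (fun k => ∫ x in A, σ k x ∂μ) atTop (𝓝 0) := by
    intro A hA
    rw [Metric.tendsto_atTop]
    intro ε' hε'
    obtain ⟨n, hn⟩ := hSapp A hA (ENNReal.ofReal (ε'/2)) (by positivity)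
    refine ⟨n + 1, fun k hk => ?_⟩
    have hzeroSn : ∫ x in S n, σ k x ∂μ = 0 :=
      hzero k (S n) (hSm n) (hTcomp k n (lt_of_lt_of_le (Nat.lt_succ_self n) hk))
    have hAind : Integrable (A.indicator (σ k)) μ := (hσint k).indicator hA
    have hSind : Integrable ((S n).indicator (σ k)) μ := (hσint k).indicator (hSm n)
    have hΔint : Integrable (((A \ S n) ∪ (S n \ A)).indicator (fun _ => (1:ℝ))) μ :=
      (integrable_const (1:ℝ)).indicator (((hA.diff (hSm n)).union ((hSm n).diff hA)))
    have hdiffbd : |∫ x in A, σ k x ∂μ - ∫ x in S n, σ k x ∂μ|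
        ≤ (μ ((A \ S n) ∪ (S n \ A))).toReal := by
      rw [← integral_indicator hA, ← integral_indicator (hSm n), ← integral_sub hAind hSind]
      calc |∫ x, (A.indicator (σ k) x - (S n).indicator (σ k) x) ∂μ|
          ≤ ∫ x, |A.indicator (σ k) x - (S n).indicator (σ k) x| ∂μ := by
            simpa [Real.norm_eq_abs] using norm_integral_le_integral_norm
              (μ := μ) (fun x => A.indicator (σ k) x - (S n).indicator (σ k) x)
        _ ≤ ∫ x, ((A \ S n) ∪ (S n \ A)).indicator (fun _ => (1:ℝ)) x ∂μ := by
            refine integral_mono (hAind.sub hSind).abs hΔint fun x => ?_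
            by_cases hxA : x ∈ A <;> by_cases hxS : x ∈ S n
            · simp [Set.indicator_of_mem, hxA, hxS,
                Set.indicator_of_notMem (fun h => by
                  rcases h with h | h
                  exacts [h.2 hxS, h.2 hxA] : x ∉ (A \ S n) ∪ (S n \ A))]
            · have hx : x ∈ (A \ S n) ∪ (S n \ A) := Or.inl ⟨hxA, hxS⟩
              simpa [hxA, hxS, hx] using hσbd k x
            · have hx : x ∈ (A \ S n) ∪ (S n \ A) := Or.inr ⟨hxS, hxA⟩
              simpa [hxA, hxS, hx] using hσbd k x
            · simp [hxA, hxS,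
                Set.indicator_of_notMem (fun h => by
                  rcases h with h | h
                  exacts [hxA h.1, hxS h.1] : x ∉ (A \ S n) ∪ (S n \ A))]
        _ = (μ ((A \ S n) ∪ (S n \ A))).toReal := by
            rw [integral_indicator_const (1:ℝ) (((hA.diff (hSm n)).union ((hSm n).diff hA))),
              smul_eq_mul, mul_one, measureReal_def]
    have htoReal : (μ ((A \ S n) ∪ (S n \ A))).toReal < ε' / 2 :=
      (ENNReal.lt_ofReal_iff_toReal_lt (measure_ne_top μ _)).1 hn
    rw [Real.dist_eq, sub_zero]
    calc |∫ x in A, σ k x ∂μ| = |∫ x in A, σ k x ∂μ - ∫ x in S n, σ k x ∂μ| := by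
          rw [hzeroSn, sub_zero]
      _ ≤ (μ ((A \ S n) ∪ (S n \ A))).toReal := hdiffbd
      _ < ε' / 2 := htoReal
      _ < ε' := by linarith
  refine ⟨σ, hσmeas, hσabs, ?_⟩
  have hσm' : ∀ k w, Integrable w μ → Integrable (fun x => σ k x * w x) μ := fun k w hw =>
    hw.bdd_mul (hσmeas k).aestronglyMeasurable
      (Eventually.of_forall fun x => by simpa [Real.norm_eq_abs] using hσbd k x)
  have h_ind : ∀ (c : ℝ) ⦃s : Set X⦄, MeasurableSet s → μ s < ⊤ →
      Tendsto (fun k => ∫ x, σ k x * s.indicator (fun _ => c) x ∂μ) atTop (𝓝 0) := by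
    intro c s hs _
    have heq : ∀ k, ∫ x, σ k x * s.indicator (fun _ => c) x ∂μ = (∫ x in s, σ k x ∂μ) * c := by
      intro k
      have hfun : (fun x => σ k x * s.indicator (fun _ => c) x)
          = fun x => s.indicator (fun y => σ k y * c) x := by
        funext x
        by_cases hx : x ∈ s <;> simp [hx]
      rw [hfun, integral_indicator hs, integral_mul_const]
    have := (hInd s hs).mul_const c
    rw [zero_mul] at this
    simpa [heq] using this
  have h_add : ∀ ⦃f g : X → ℝ⦄, Disjoint (Function.support f) (Function.support g) →
      Integrable f μ → Integrable g μ →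
      Tendsto (fun k => ∫ x, σ k x * f x ∂μ) atTop (𝓝 0) →
      Tendsto (fun k => ∫ x, σ k x * g x ∂μ) atTop (𝓝 0) →
      Tendsto (fun k => ∫ x, σ k x * (f + g) x ∂μ) atTop (𝓝 0) := by
    intro f g _ hf hg hPf hPg
    have heq : (fun k => ∫ x, σ k x * (f + g) x ∂μ)
        = fun k => (∫ x, σ k x * f x ∂μ) + ∫ x, σ k x * g x ∂μ := by
      funext k
      rw [← integral_add (hσm' k f hf) (hσm' k g hg)]
      congr 1
      funext x
      simp only [Pi.add_apply]
      ring
    rw [heq]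
    simpa using hPf.add hPg
  have h_closed : IsClosed {φ : X →₁[μ] ℝ |
      Tendsto (fun k => ∫ x, σ k x * φ x ∂μ) atTop (𝓝 0)} := by
    refine isClosed_of_closure_subset fun φ hφ => ?_
    rw [Set.mem_setOf_eq, Metric.tendsto_atTop]
    intro ε' hε'
    obtain ⟨ψ, hψS, hψd⟩ := Metric.mem_closure_iff.1 hφ (ε'/3) (by positivity)
    obtain ⟨N, hN⟩ := Metric.tendsto_atTop.1 hψS (ε'/3) (by positivity)
    refine ⟨N, fun k hk => ?_⟩
    have hφint : Integrable (fun x => σ k x * φ x) μ := hσm' k _ (L1.integrable_coeFn φ)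
    have hψint : Integrable (fun x => σ k x * ψ x) μ := hσm' k _ (L1.integrable_coeFn ψ)
    have hdistint : dist φ ψ = ∫ x, |φ x - ψ x| ∂μ := by
      rw [dist_eq_norm, L1.norm_eq_integral_norm]
      refine integral_congr_ae ?_
      filter_upwards [Lp.coeFn_sub φ ψ] with x hx
      rw [hx]
      simp [Real.norm_eq_abs]
    have hb1 : |∫ x, σ k x * φ x ∂μ - ∫ x, σ k x * ψ x ∂μ| ≤ dist φ ψ := by
      rw [← integral_sub hφint hψint]
      calc |∫ x, (σ k x * φ x - σ k x * ψ x) ∂μ|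
          ≤ ∫ x, |σ k x * φ x - σ k x * ψ x| ∂μ := by
            simpa [Real.norm_eq_abs] using norm_integral_le_integral_norm
              (μ := μ) (fun x => σ k x * φ x - σ k x * ψ x)
        _ ≤ ∫ x, |φ x - ψ x| ∂μ := by
            refine integral_mono (hφint.sub hψint).abs
              ((L1.integrable_coeFn φ).sub (L1.integrable_coeFn ψ)).abs fun x => ?_
            rw [← mul_sub, abs_mul]
            exact mul_le_of_le_one_left (abs_nonneg _) (hσbd k x)
        _ = dist φ ψ := hdistint.symm
    have hψk : |∫ x, σ k x * ψ x ∂μ| < ε'/3 := by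
      have := hN k hk
      rwa [Real.dist_eq, sub_zero] at this
    rw [Real.dist_eq, sub_zero]
    calc |∫ x, σ k x * φ x ∂μ|
        = |(∫ x, σ k x * φ x ∂μ - ∫ x, σ k x * ψ x ∂μ) + ∫ x, σ k x * ψ x ∂μ| := by
          ring_nf
      _ ≤ |∫ x, σ k x * φ x ∂μ - ∫ x, σ k x * ψ x ∂μ| + |∫ x, σ k x * ψ x ∂μ| := abs_add_le _ _
      _ < ε'/3 + ε'/3 := add_lt_add_of_le_of_lt (hb1.trans hψd.le) hψk
      _ < ε' := by linarith
  have h_ae : ∀ ⦃f g : X → ℝ⦄, f =ᵐ[μ] g → Integrable f μ →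
      Tendsto (fun k => ∫ x, σ k x * f x ∂μ) atTop (𝓝 0) →
      Tendsto (fun k => ∫ x, σ k x * g x ∂μ) atTop (𝓝 0) := by
    intro f g hfg _ hPf
    have heq : ∀ k, ∫ x, σ k x * g x ∂μ = ∫ x, σ k x * f x ∂μ := by
      intro k
      refine integral_congr_ae ?_
      filter_upwards [hfg] with x hx
      rw [hx]
    simpa [heq] using hPf
  exact fun w hw => Integrable.induction
    (P := fun w => Tendsto (fun k => ∫ x, σ k x * w x ∂μ) atTop (𝓝 0))
    h_ind h_add h_closed h_ae hw
end main

/-- a non-bang-bang local `L¹`-minimizer of a weak* sequentially continuous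
functional admits, at every sufficiently small distance `δ`, admissible controls that are
`δ`-far in `L¹` and almost do not increase the objective. -/
theorem no_growth_for_non_bang_bang
    {X : Type*} [MeasurableSpace X] (μ : Measure X) [IsFiniteMeasure μ]
    (hcomplete : μ.IsComplete)
    (hseparable : ∃ S : ℕ → Set X, (∀ n, MeasurableSet (S n)) ∧
      ∀ A : Set X, MeasurableSet A → ∀ ε : ℝ≥0∞, 0 < ε →
        ∃ n, μ ((A \ S n) ∪ (S n \ A)) < ε)
    (hnonatomic : ∀ A : Set X, MeasurableSet A → 0 < μ A →
      ∃ C, C ⊆ A ∧ MeasurableSet C ∧ 0 < μ C ∧ μ C < μ A)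
    (α β : ℝ) (hαβ : α < β)
    (J : (X → ℝ) → ℝ)
    (hJcont : ∀ (u : ℕ → X → ℝ) (v : X → ℝ), (∀ k, u k ∈ Uad μ α β) → v ∈ Uad μ α β →
      (∀ w : X → ℝ, Integrable w μ →
        Tendsto (fun k => ∫ x, u k x * w x ∂μ) atTop (𝓝 (∫ x, v x * w x ∂μ))) →
      Tendsto (fun k => J (u k)) atTop (𝓝 (J v)))
    (ubar : X → ℝ) (hubar : ubar ∈ Uad μ α β)
    (hmin : ∃ r > (0:ℝ), ∀ u ∈ Uad μ α β, (∫ x, |u x - ubar x| ∂μ) < r → J ubar ≤ J u)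
    (hnbb : 0 < μ {x | α < ubar x ∧ ubar x < β}) :
    ∃ δ₀ > (0:ℝ), ∀ δ : ℝ, 0 < δ → δ ≤ δ₀ → ∀ ε > (0:ℝ),
      ∃ u ∈ Uad μ α β, (∫ x, |u x - ubar x| ∂μ) = δ ∧ J u ≤ J ubar + ε := by
  obtain ⟨hub_meas, hub_ae⟩ := hubar
  -- find a set `A'` on which `ubar` is uniformly away from the bounds
  obtain ⟨n₀, hn₀⟩ : ∃ n : ℕ, 0 < μ (ubar ⁻¹' Set.Icc (α + 1/(n+1)) (β - 1/(n+1))) := by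
    by_contra hcon
    push_neg at hcon
    have hnull : μ (⋃ n : ℕ, ubar ⁻¹' Set.Icc (α + 1/(n+1)) (β - 1/(n+1))) = 0 :=
      measure_iUnion_null fun n => le_antisymm (hcon n) zero_le
    have hsub : {x | α < ubar x ∧ ubar x < β}
        ⊆ ⋃ n : ℕ, ubar ⁻¹' Set.Icc (α + 1/(n+1)) (β - 1/(n+1)) := by
      intro x ⟨h1, h2⟩
      obtain ⟨n, hn⟩ := exists_nat_one_div_lt (lt_min (sub_pos.2 h1) (sub_pos.2 h2))
      refine Set.mem_iUnion.2 ⟨n, ?_⟩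
      have h3 := lt_of_lt_of_le hn (min_le_left _ _)
      have h4 := lt_of_lt_of_le hn (min_le_right _ _)
      exact ⟨by push_cast at h3 ⊢; linarith, by push_cast at h4 ⊢; linarith⟩
    exact absurd (le_trans (measure_mono hsub) hnull.le) (not_le.2 hnbb)
  set c : ℝ := 1/(n₀+1) with hc
  have hc0 : 0 < c := by positivity
  set A' : Set X := ubar ⁻¹' Set.Icc (α + c) (β - c) with hA'
  have hA'm : MeasurableSet A' := hub_meas measurableSet_Icc
  set m : ℝ := (μ A').toReal with hm
  have hm0 : 0 < m := ENNReal.toReal_pos hn₀.ne' (measure_ne_top μ A')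
  obtain ⟨σ, hσmeas, hσabs, hσtend⟩ := exists_oscillation μ hseparable hnonatomic A' hA'm
  have hσbd : ∀ k x, |σ k x| ≤ 1 := by
    intro k x
    rw [hσabs k x]
    by_cases hx : x ∈ A' <;> simp [hx]
  refine ⟨c * m, by positivity, ?_⟩
  intro δ hδ0 hδle ε hε
  set γ : ℝ := δ / m with hγ
  have hγ0 : 0 < γ := by positivity
  have hγc : γ ≤ c := (div_le_iff₀ hm0).2 (by linarith)
  set u : ℕ → X → ℝ := fun k x => ubar x + γ * σ k x with hu
  have huU : ∀ k, u k ∈ Uad μ α β := by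
    intro k
    refine ⟨hub_meas.add ((hσmeas k).const_mul γ), ?_⟩
    filter_upwards [hub_ae] with x hx
    by_cases hxA : x ∈ A'
    · have hb : α + c ≤ ubar x ∧ ubar x ≤ β - c := hxA
      have h1 : |γ * σ k x| ≤ γ := by
        rw [abs_mul, abs_of_pos hγ0]
        exact mul_le_of_le_one_right hγ0.le (hσbd k x)
      rw [abs_le] at h1
      constructor
      · have := h1.1; simp only [hu]; linarith [hb.1]
      · have := h1.2; simp only [hu]; linarith [hb.2]
    · have h0 : σ k x = 0 := by
        have := hσabs k x
        rw [Set.indicator_of_notMem hxA] at this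
        exact abs_eq_zero.1 this
      simp only [hu, h0, mul_zero, add_zero]
      exact hx
  have hdist : ∀ k, ∫ x, |u k x - ubar x| ∂μ = δ := by
    intro k
    have heq : (fun x => |u k x - ubar x|) = fun x => γ * A'.indicator (fun _ => (1:ℝ)) x := by
      funext x
      simp only [hu, add_sub_cancel_left, abs_mul, abs_of_pos hγ0, hσabs k x]
    rw [heq, integral_const_mul, integral_indicator_const (1:ℝ) hA'm, smul_eq_mul, mul_one,
      measureReal_def, ← hm, hγ]
    field_simp
  have hweak : ∀ w : X → ℝ, Integrable w μ →
      Tendsto (fun k => ∫ x, u k x * w x ∂μ) atTop (𝓝 (∫ x, ubar x * w x ∂μ)) := by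
    intro w hw
    have hCb : ∀ᵐ x ∂μ, ‖ubar x‖ ≤ max |α| |β| := by
      filter_upwards [hub_ae] with x hx
      rw [Real.norm_eq_abs, abs_le]
      constructor
      · have : -|α| ≤ α := neg_abs_le α
        have h2 : -(max |α| |β|) ≤ -|α| := neg_le_neg (le_max_left _ _)
        linarith [hx.1]
      · have : β ≤ |β| := le_abs_self β
        linarith [hx.2, le_max_right |α| |β|]
    have hubw : Integrable (fun x => ubar x * w x) μ :=
      hw.bdd_mul hub_meas.aestronglyMeasurable hCb
    have hσw : ∀ k, Integrable (fun x => σ k x * w x) μ := fun k =>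
      hw.bdd_mul (hσmeas k).aestronglyMeasurable
        (Eventually.of_forall fun x => by simpa [Real.norm_eq_abs] using hσbd k x)
    have heq : (fun k => ∫ x, u k x * w x ∂μ)
        = fun k => (∫ x, ubar x * w x ∂μ) + γ * ∫ x, σ k x * w x ∂μ := by
      funext k
      rw [← integral_const_mul γ, ← integral_add hubw ((hσw k).const_mul γ)]
      congr 1
      funext x
      simp only [hu]
      ring
    rw [heq]
    have h2 : Tendsto (fun k => γ * ∫ x, σ k x * w x ∂μ) atTop (𝓝 (γ * 0)) :=
      (hσtend w hw).const_mul γ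
    have h3 := (tendsto_const_nhds (x := ∫ x, ubar x * w x ∂μ) (f := atTop)).add h2
    simpa using h3
  have hJ := hJcont u ubar huU ⟨hub_meas, hub_ae⟩ hweak
  have hev : ∀ᶠ k in atTop, J (u k) < J ubar + ε :=
    hJ.eventually_lt_const (by linarith)
  obtain ⟨k, hk⟩ := hev.exists
  exact ⟨u k, huU k, hdist k, hk.le⟩
end

section
/- Let (X,B,η) be a finite, complete, separable, non-atomic measure space, U_ad = {u ∈ L^∞(X) : α ≤ u ≤ β a.e.}, and J : U_ad → ℝ weak* sequentially continuous. If ū ∈ U_ad is a local minimizer of J in L^1(X) that is not bang-bang, then there do NOT exist constants ν > 0, δ > 0, γ > 0 and p ∈ [1,∞] such that J(u) ≥ J(ū) + ν ‖u − ū‖_{L^p(X)}^γ for all u ∈ U_ad with ‖u − ū‖_{L^1(X)} < δ. -/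
open MeasureTheory Filter Topology
open scoped ENNReal

open Set

private lemma aux_small_piece {X : Type*} [MeasurableSpace X] (μ : Measure X) [IsFiniteMeasure μ]
    (hna : ∀ A : Set X, MeasurableSet A → 0 < μ A →
      ∃ C, C ⊆ A ∧ MeasurableSet C ∧ 0 < μ C ∧ μ C < μ A)
    (ε : ℝ) (hε : 0 < ε) (A : Set X) (hA : MeasurableSet A) (hApos : 0 < μ A) :
    ∃ C, C ⊆ A ∧ MeasurableSet C ∧ 0 < μ C ∧ (μ C).toReal ≤ ε := by
  obtain ⟨n, hn⟩ : ∃ n : ℕ, (μ A).toReal ≤ ε * 2 ^ n := by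
    obtain ⟨n, hn⟩ := pow_unbounded_of_one_lt ((μ A).toReal / ε) (one_lt_two (α := ℝ))
    exact ⟨n, by rw [div_lt_iff₀ hε] at hn; nlinarith⟩
  induction n generalizing A with
  | zero => exact ⟨A, subset_rfl, hA, hApos, by simpa using hn⟩
  | succ n ih =>
    obtain ⟨C, hCA, hCm, hCpos, hClt⟩ := hna A hA hApos
    have hdm : MeasurableSet (A \ C) := hA.diff hCm
    have hsum : (μ C).toReal + (μ (A \ C)).toReal = (μ A).toReal := by
      rw [← ENNReal.toReal_add (measure_ne_top μ C) (measure_ne_top μ (A \ C))]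
      congr 1
      rw [measure_add_diff hCm.nullMeasurableSet A, Set.union_eq_self_of_subset_left hCA]
    have hdpos : 0 < μ (A \ C) := by
      rcases (zero_le : 0 ≤ μ (A \ C)).lt_or_eq with h | h
      · exact h
      · exfalso
        have : (μ C).toReal = (μ A).toReal := by rw [← hsum, ← h]; simp
        have := ENNReal.toReal_lt_toReal (measure_ne_top μ C) (measure_ne_top μ A) |>.mpr hClt
        linarith
    have h2 : (2:ℝ) ^ (n+1) = 2 ^ n * 2 := by ring
    rcases le_total ((μ C).toReal) ((μ (A \ C)).toReal) with h | h
    · have : (μ C).toReal ≤ ε * 2 ^ n := by nlinarith [hε.le, pow_pos (zero_lt_two (α := ℝ)) n]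
      obtain ⟨D, hD1, hD2, hD3, hD4⟩ := ih C hCm hCpos this
      exact ⟨D, hD1.trans hCA, hD2, hD3, hD4⟩
    · have : (μ (A \ C)).toReal ≤ ε * 2 ^ n := by nlinarith [hε.le, pow_pos (zero_lt_two (α := ℝ)) n]
      obtain ⟨D, hD1, hD2, hD3, hD4⟩ := ih (A \ C) hdm hdpos this
      exact ⟨D, hD1.trans Set.diff_subset, hD2, hD3, hD4⟩

private lemma aux_approx_measure {X : Type*} [MeasurableSpace X] (μ : Measure X) [IsFiniteMeasure μ]
    (hna : ∀ A : Set X, MeasurableSet A → 0 < μ A →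
      ∃ C, C ⊆ A ∧ MeasurableSet C ∧ 0 < μ C ∧ μ C < μ A)
    (A : Set X) (hA : MeasurableSet A) (t ε : ℝ) (ht0 : 0 ≤ t)
    (htA : t < (μ A).toReal) (hε : 0 < ε) :
    ∃ B, B ⊆ A ∧ MeasurableSet B ∧ t - ε ≤ (μ B).toReal ∧ (μ B).toReal ≤ t := by
  classical
  by_contra hcon
  push_neg at hcon
  -- the claim: a near-maximal admissible piece to add
  have hclaim : ∀ B : Set X, B ⊆ A → MeasurableSet B → (μ B).toReal ≤ t →
      ∃ C, (C ⊆ A \ B ∧ MeasurableSet C ∧ (μ C).toReal ≤ t - (μ B).toReal) ∧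
        ∀ C', C' ⊆ A \ B → MeasurableSet C' → (μ C').toReal ≤ t - (μ B).toReal →
          (μ C').toReal ≤ 2 * (μ C).toReal := by
    intro B hBA hBm hBt
    set G : Set ℝ := {r | ∃ C : Set X, C ⊆ A \ B ∧ MeasurableSet C ∧
      (μ C).toReal ≤ t - (μ B).toReal ∧ (μ C).toReal = r} with hG
    have hG0 : (0:ℝ) ∈ G := ⟨∅, by simp, MeasurableSet.empty, by simp; linarith, by simp⟩
    have hGbdd : BddAbove G := by
      refine ⟨(μ A).toReal, ?_⟩
      rintro r ⟨C, hC1, _, _, rfl⟩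
      exact ENNReal.toReal_mono (measure_ne_top μ A)
        (measure_mono (hC1.trans diff_subset))
    set s := sSup G with hs
    rcases le_or_gt s 0 with hns | hps
    · refine ⟨∅, ⟨by simp, MeasurableSet.empty, by simp; linarith⟩, ?_⟩
      intro C' h1 h2 h3
      have : (μ C').toReal ∈ G := ⟨C', h1, h2, h3, rfl⟩
      have := le_csSup hGbdd this
      simp only [measure_empty, ENNReal.toReal_zero, mul_zero]
      linarith
    · obtain ⟨r, hrG, hr⟩ := exists_lt_of_lt_csSup ⟨0, hG0⟩ (half_lt_self hps)
      obtain ⟨C, hC1, hC2, hC3, rfl⟩ := hrG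
      refine ⟨C, ⟨hC1, hC2, hC3⟩, ?_⟩
      intro C' h1 h2 h3
      have : (μ C').toReal ∈ G := ⟨C', h1, h2, h3, rfl⟩
      have := le_csSup hGbdd this
      linarith
  -- the invariant set
  set T : Set (Set X) := {B | B ⊆ A ∧ MeasurableSet B ∧ (μ B).toReal ≤ t} with hT
  set step : Set X → Set X := fun B =>
    if h : B ∈ T then B ∪ Classical.choose (hclaim B h.1 h.2.1 h.2.2) else B with hstep
  set g : ℕ → Set X := fun n => step^[n] ∅ with hg
  have hg0 : g 0 = ∅ := rfl
  have hgsucc : ∀ n, g (n+1) = step (g n) := fun n => Function.iterate_succ_apply' step n ∅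
  have hmuu : ∀ B C : Set X, MeasurableSet C → Disjoint B C →
      (μ (B ∪ C)).toReal = (μ B).toReal + (μ C).toReal := by
    intro B C hCm hd
    rw [measure_union hd hCm, ENNReal.toReal_add (measure_ne_top μ B) (measure_ne_top μ C)]
  have hmemT : ∀ n, g n ∈ T := by
    intro n
    induction n with
    | zero => exact ⟨empty_subset A, MeasurableSet.empty, by simpa [hg0] using ht0⟩
    | succ n ih =>
      rw [hgsucc n, hstep]
      simp only [dif_pos ih]
      obtain ⟨⟨hC1, hC2, hC3⟩, _⟩ := Classical.choose_spec (hclaim (g n) ih.1 ih.2.1 ih.2.2)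
      have hdisj : Disjoint (g n) (Classical.choose (hclaim (g n) ih.1 ih.2.1 ih.2.2)) :=
        (disjoint_sdiff_left.mono_left hC1).symm
      refine ⟨union_subset ih.1 (hC1.trans diff_subset), ih.2.1.union hC2, ?_⟩
      rw [hmuu _ _ hC2 hdisj]
      linarith [ih.2.2]
  -- monotonicity
  have hmono : Monotone g := by
    apply monotone_nat_of_le_succ
    intro n
    rw [hgsucc n, hstep]
    simp only [dif_pos (hmemT n)]
    exact subset_union_left
  -- the union
  set Binf : Set X := ⋃ n, g n with hBinf
  have hBinfm : MeasurableSet Binf := MeasurableSet.iUnion (fun n => (hmemT n).2.1)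
  have hBinfA : Binf ⊆ A := iUnion_subset (fun n => (hmemT n).1)
  have hBinft : (μ Binf).toReal ≤ t := by
    have h1 : μ Binf = ⨆ n, μ (g n) :=
      (hmono.directed_le).measure_iUnion
    have h2 : μ Binf ≤ ENNReal.ofReal t := by
      rw [h1]
      exact iSup_le fun n => ENNReal.le_ofReal_iff_toReal_le (measure_ne_top μ (g n)) ht0 |>.mpr
        (hmemT n).2.2
    exact ENNReal.toReal_le_of_le_ofReal ht0 h2
  -- every g n fails
  have hfail : ∀ n, (μ (g n)).toReal < t - ε := by
    intro n
    by_contra h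
    push_neg at h
    exact absurd ((hmemT n).2.2) (not_le.mpr (hcon _ (hmemT n).1 (hmemT n).2.1 h))
  -- positive leftover
  have hleft : 0 < μ (A \ Binf) := by
    have hdiff : μ (A \ Binf) = μ A - μ Binf :=
      measure_diff hBinfA hBinfm.nullMeasurableSet (measure_ne_top μ Binf)
    have : (μ (A \ Binf)).toReal = (μ A).toReal - (μ Binf).toReal := by
      rw [hdiff, ENNReal.toReal_sub_of_le (measure_mono hBinfA) (measure_ne_top μ A)]
    have hpos : 0 < (μ (A \ Binf)).toReal := by rw [this]; linarith
    exact ENNReal.toReal_pos_iff.mp hpos |>.1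
  obtain ⟨C₀, hC₀1, hC₀2, hC₀3, hC₀4⟩ :=
    aux_small_piece μ hna ε hε (A \ Binf) (hA.diff hBinfm) hleft
  have hc₀pos : 0 < (μ C₀).toReal :=
    ENNReal.toReal_pos (ne_of_gt hC₀3) (measure_ne_top μ C₀)
  -- each step adds at least (μ C₀).toReal / 2
  have hstep_ge : ∀ n, (μ (g (n+1))).toReal ≥ (μ (g n)).toReal + (μ C₀).toReal / 2 := by
    intro n
    have ih := hmemT n
    have hC₀sub : C₀ ⊆ A \ g n :=
      hC₀1.trans (diff_subset_diff_right (subset_iUnion g n))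
    obtain ⟨⟨hC1, hC2, hC3⟩, hmax⟩ := Classical.choose_spec (hclaim (g n) ih.1 ih.2.1 ih.2.2)
    have hC₀le : (μ C₀).toReal ≤ t - (μ (g n)).toReal := by
      have := hfail n; linarith
    have hkey := hmax C₀ hC₀sub hC₀2 hC₀le
    have hdisj : Disjoint (g n) (Classical.choose (hclaim (g n) ih.1 ih.2.1 ih.2.2)) :=
      (disjoint_sdiff_left.mono_left hC1).symm
    rw [hgsucc n, hstep]
    simp only [dif_pos ih]
    rw [hmuu _ _ hC2 hdisj]
    linarith
  have hgrow : ∀ n, (μ (g n)).toReal ≥ n * ((μ C₀).toReal / 2) := by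
    intro n
    induction n with
    | zero => simp [hg0]
    | succ n ih =>
      have := hstep_ge n
      push_cast
      nlinarith
  obtain ⟨n, hn⟩ := exists_nat_gt (t / ((μ C₀).toReal / 2))
  have h1 := hgrow n
  have h2 := (hmemT n).2.2
  have : t < n * ((μ C₀).toReal / 2) := by
    rw [div_lt_iff₀ (by linarith)] at hn
    linarith
  linarith

set_option synthInstance.maxHeartbeats 1000000 in
set_option maxHeartbeats 2000000 in
/-- for a non-bang-bang local `L¹`-minimizer of a weak* sequentially continuous
functional, no local growth of the form `J(u) ≥ J(ū) + ν‖u − ū‖_{L^p}^γ` can hold. -/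
theorem no_polynomial_growth_for_non_bang_bang
    {X : Type*} [MeasurableSpace X] (μ : Measure X) [IsFiniteMeasure μ]
    (hcomplete : μ.IsComplete)
    (hseparable : ∃ S : ℕ → Set X, (∀ n, MeasurableSet (S n)) ∧
      ∀ A : Set X, MeasurableSet A → ∀ ε : ℝ≥0∞, 0 < ε →
        ∃ n, μ ((A \ S n) ∪ (S n \ A)) < ε)
    (hnonatomic : ∀ A : Set X, MeasurableSet A → 0 < μ A →
      ∃ C, C ⊆ A ∧ MeasurableSet C ∧ 0 < μ C ∧ μ C < μ A)
    (α β : ℝ) (hαβ : α < β)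
    (J : (X → ℝ) → ℝ)
    (hJcont : ∀ (u : ℕ → X → ℝ) (v : X → ℝ), (∀ k, u k ∈ Uad μ α β) → v ∈ Uad μ α β →
      (∀ w : X → ℝ, Integrable w μ →
        Tendsto (fun k => ∫ x, u k x * w x ∂μ) atTop (𝓝 (∫ x, v x * w x ∂μ))) →
      Tendsto (fun k => J (u k)) atTop (𝓝 (J v)))
    (ubar : X → ℝ) (hubar : ubar ∈ Uad μ α β)
    (hmin : ∃ r > (0:ℝ), ∀ u ∈ Uad μ α β, (∫ x, |u x - ubar x| ∂μ) < r → J ubar ≤ J u)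
    (hnbb : 0 < μ {x | α < ubar x ∧ ubar x < β}) :
    ¬ ∃ ν > (0:ℝ), ∃ δ > (0:ℝ), ∃ γ > (0:ℝ), ∃ p : ℝ≥0∞, 1 ≤ p ∧
      ∀ u ∈ Uad μ α β, (∫ x, |u x - ubar x| ∂μ) < δ →
        J ubar + ν * ((eLpNorm (fun x => u x - ubar x) p μ).toReal) ^ γ ≤ J u := by
  classical
  rintro ⟨ν, hν, δ, hδ, γ, hγ, p, hp, hgrow⟩
  obtain ⟨S, hSmeas, hSapprox⟩ := hseparable
  obtain ⟨hubar_meas, hubar_ae⟩ := hubar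
  -- find a margin set E of positive measure
  obtain ⟨m, hm⟩ : ∃ m : ℕ, 0 < μ {x | α + 1/(m+1) ≤ ubar x ∧ ubar x ≤ β - 1/(m+1)} := by
    by_contra h
    push_neg at h
    have hnull : μ (⋃ m : ℕ, {x | α + 1/(m+1) ≤ ubar x ∧ ubar x ≤ β - 1/(m+1)}) = 0 :=
      measure_iUnion_null (fun m => le_zero_iff.mp (h m))
    have hsub : {x | α < ubar x ∧ ubar x < β} ⊆
        ⋃ m : ℕ, {x | α + 1/(m+1) ≤ ubar x ∧ ubar x ≤ β - 1/(m+1)} := by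
      intro x hx
      obtain ⟨h1, h2⟩ := hx
      have hpos : (0:ℝ) < min (ubar x - α) (β - ubar x) :=
        lt_min (sub_pos.mpr h1) (sub_pos.mpr h2)
      obtain ⟨n, hn⟩ := exists_nat_one_div_lt hpos
      refine mem_iUnion.mpr ⟨n, ?_⟩
      have ha := (lt_min_iff.mp hn).1
      have hb := (lt_min_iff.mp hn).2
      exact ⟨by linarith, by linarith⟩
    exact absurd (le_trans (measure_mono hsub) (le_of_eq hnull)) (not_le.mpr hnbb)
  set c₀ : ℝ := 1/(m+1) with hc₀
  have hc₀pos : 0 < c₀ := by positivity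
  set E : Set X := {x | α + c₀ ≤ ubar x ∧ ubar x ≤ β - c₀} with hEdef
  have hE : MeasurableSet E := by
    have : E = ubar ⁻¹' (Set.Icc (α + c₀) (β - c₀)) := by
      ext x; simp [hEdef, Set.mem_Icc]
    rw [this]
    exact hubar_meas measurableSet_Icc
  have hEpos : 0 < μ E := hm
  -- the amplitude
  set ρ : ℝ := min c₀ (δ / ((μ E).toReal + 1)) with hρ
  have hρpos : 0 < ρ := lt_min hc₀pos (by positivity)
  have hρc₀ : ρ ≤ c₀ := min_le_left _ _
  have hρδ : ρ * (μ E).toReal < δ := by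
    have hM : (0:ℝ) ≤ (μ E).toReal := ENNReal.toReal_nonneg
    have h1 : δ / ((μ E).toReal + 1) * (μ E).toReal < δ := by
      rw [div_mul_eq_mul_div, div_lt_iff₀ (by linarith)]
      nlinarith
    calc ρ * (μ E).toReal ≤ δ / ((μ E).toReal + 1) * (μ E).toReal :=
          mul_le_mul_of_nonneg_right (min_le_right _ _) hM
      _ < δ := h1
  -- the dyadic partition of E generated by S 0, ..., S (k-1)
  set Pt : ∀ k : ℕ, (Fin k → Bool) → Set X :=
    fun k σ => E ∩ ⋂ i : Fin k, (if σ i then S i.val else (S i.val)ᶜ) with hPt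
  have hPtm : ∀ k (σ : Fin k → Bool), MeasurableSet (Pt k σ) := by
    intro k σ
    refine hE.inter (MeasurableSet.iInter fun i => ?_)
    by_cases h : σ i <;> simp [h, hSmeas i.val, (hSmeas i.val).compl]
  have hPtsub : ∀ k (σ : Fin k → Bool) (i : Fin k),
      Pt k σ ⊆ (if σ i then S i.val else (S i.val)ᶜ) := by
    intro k σ i
    exact (inter_subset_right).trans (iInter_subset _ i)
  have hPtE : ∀ k (σ : Fin k → Bool), Pt k σ ⊆ E := fun k σ => inter_subset_left
  have hPtd : ∀ k (σ τ : Fin k → Bool), σ ≠ τ → Disjoint (Pt k σ) (Pt k τ) := by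
    intro k σ τ hστ
    obtain ⟨i, hi⟩ := Function.ne_iff.mp hστ
    have key : ∀ (σ' τ' : Fin k → Bool), σ' i = true → τ' i = false →
        Disjoint (Pt k σ') (Pt k τ') := by
      intro σ' τ' h1' h2'
      have a1 := hPtsub k σ' i
      have a2 := hPtsub k τ' i
      rw [h1', if_pos rfl] at a1
      rw [h2', if_neg Bool.false_ne_true] at a2
      exact Disjoint.mono a1 a2 disjoint_compl_right
    cases hσi : σ i <;> cases hτi : τ i
    · exact absurd (hσi.trans hτi.symm) hi
    · exact (key τ σ hτi hσi).symm
    · exact key σ τ hσi hτi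
    · exact absurd (hσi.trans hτi.symm) hi
  -- the covering of E ∩ S n by partition pieces
  have hcover : ∀ k (i : Fin k), E ∩ S i.val =
      ⋃ σ ∈ Finset.univ.filter (fun σ : Fin k → Bool => σ i = true), Pt k σ := by
    intro k i
    ext x
    simp only [Set.mem_iUnion, Finset.mem_filter, Finset.mem_univ, true_and, exists_prop,
      Set.mem_inter_iff]
    constructor
    · rintro ⟨hxE, hxS⟩
      refine ⟨fun j => decide (x ∈ S j.val), by simpa using hxS, hxE, ?_⟩
      refine Set.mem_iInter.mpr fun j => ?_
      by_cases h : x ∈ S j.val <;> simp [h]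
    · rintro ⟨σ, hσi, hx⟩
      refine ⟨hx.1, ?_⟩
      have := hPtsub k σ i hx
      rwa [hσi, if_pos rfl] at this
  -- approximate halving pieces
  set εs : ℕ → ℝ := fun k => (1/(k+1)) * (1/2)^k with hεs
  have hεspos : ∀ k, 0 < εs k := by intro k; positivity
  have hDex : ∀ k (σ : Fin k → Bool), ∃ D, D ⊆ Pt k σ ∧ MeasurableSet D ∧
      (μ (Pt k σ)).toReal / 2 - εs k ≤ (μ D).toReal ∧ (μ D).toReal ≤ (μ (Pt k σ)).toReal / 2 := by
    intro k σ
    rcases (zero_le : 0 ≤ μ (Pt k σ)).lt_or_eq with hpos | hzero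
    · have htr : 0 < (μ (Pt k σ)).toReal :=
        ENNReal.toReal_pos (ne_of_gt hpos) (measure_ne_top _ _)
      obtain ⟨D, h1, h2, h3, h4⟩ := aux_approx_measure μ hnonatomic (Pt k σ) (hPtm k σ)
        ((μ (Pt k σ)).toReal / 2) (εs k) (by linarith) (by linarith) (hεspos k)
      exact ⟨D, h1, h2, h3, h4⟩
    · refine ⟨∅, empty_subset _, MeasurableSet.empty, ?_, ?_⟩ <;>
        simp [← hzero, le_of_lt (hεspos k)]
  choose D hDsub hDmeas hDlow hDhigh using hDex
  -- the oscillation sets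
  set B : ℕ → Set X := fun k => ⋃ σ ∈ (Finset.univ : Finset (Fin k → Bool)), D k σ with hB
  have hBm : ∀ k, MeasurableSet (B k) :=
    fun k => Finset.measurableSet_biUnion _ (fun σ _ => hDmeas k σ)
  have hBsub : ∀ k, B k ⊆ E := by
    intro k
    refine Set.iUnion₂_subset fun σ _ => (hDsub k σ).trans (hPtE k σ)
  -- measure of B k ∩ S n
  have hBkinter : ∀ k (i : Fin k), B k ∩ S i.val =
      ⋃ σ ∈ Finset.univ.filter (fun σ : Fin k → Bool => σ i = true), D k σ := by
    intro k i
    ext x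
    simp only [hB, Set.mem_inter_iff, Set.mem_iUnion, Finset.mem_filter, Finset.mem_univ,
      true_and, exists_prop]
    constructor
    · rintro ⟨⟨σ, hxσ⟩, hxS⟩
      refine ⟨σ, ?_, hxσ⟩
      by_contra hσi
      have hfalse : σ i = false := Bool.not_eq_true _ |>.mp hσi
      have := hPtsub k σ i (hDsub k σ hxσ)
      rw [hfalse, if_neg Bool.false_ne_true] at this
      exact this hxS
    · rintro ⟨σ, hσi, hxσ⟩
      refine ⟨⟨σ, hxσ⟩, ?_⟩
      have := hPtsub k σ i (hDsub k σ hxσ)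
      rwa [hσi, if_pos rfl] at this
  -- measure identities
  have hmuB : ∀ k (i : Fin k), μ (B k ∩ S i.val) =
      ∑ σ ∈ Finset.univ.filter (fun σ : Fin k → Bool => σ i = true), μ (D k σ) := by
    intro k i
    rw [hBkinter k i]
    refine measure_biUnion_finset ?_ (fun σ _ => hDmeas k σ)
    intro σ hσ τ hτ hστ
    exact (hPtd k σ τ hστ).mono (hDsub k σ) (hDsub k τ)
  have hmuE : ∀ k (i : Fin k), μ (E ∩ S i.val) =
      ∑ σ ∈ Finset.univ.filter (fun σ : Fin k → Bool => σ i = true), μ (Pt k σ) := by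
    intro k i
    rw [hcover k i]
    refine measure_biUnion_finset ?_ (fun σ _ => hPtm k σ)
    intro σ hσ τ hτ hστ
    exact hPtd k σ τ hστ
  -- the key quantitative estimate
  have hkey : ∀ k (i : Fin k),
      |(μ (B k ∩ S i.val)).toReal - (μ (E ∩ S i.val)).toReal / 2| ≤ 1/(k+1) := by
    intro k i
    set F := Finset.univ.filter (fun σ : Fin k → Bool => σ i = true) with hF
    have h1 : (μ (B k ∩ S i.val)).toReal = ∑ σ ∈ F, (μ (D k σ)).toReal := by
      rw [hmuB k i, ENNReal.toReal_sum (fun σ _ => measure_ne_top _ _)]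
    have h2 : (μ (E ∩ S i.val)).toReal = ∑ σ ∈ F, (μ (Pt k σ)).toReal := by
      rw [hmuE k i, ENNReal.toReal_sum (fun σ _ => measure_ne_top _ _)]
    rw [h1, h2]
    have h3 : ∑ σ ∈ F, (μ (Pt k σ)).toReal / 2 = (∑ σ ∈ F, (μ (Pt k σ)).toReal) / 2 := by
      rw [Finset.sum_div]
    rw [← h3, ← Finset.sum_sub_distrib]
    calc |∑ σ ∈ F, ((μ (D k σ)).toReal - (μ (Pt k σ)).toReal / 2)|
        ≤ ∑ σ ∈ F, |(μ (D k σ)).toReal - (μ (Pt k σ)).toReal / 2| :=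
          Finset.abs_sum_le_sum_abs _ _
      _ ≤ ∑ _σ ∈ F, εs k := by
          refine Finset.sum_le_sum fun σ _ => abs_le.mpr ⟨?_, ?_⟩
          · linarith [hDlow k σ]
          · linarith [hDhigh k σ, hεspos k]
      _ = (F.card : ℝ) * εs k := by rw [Finset.sum_const, nsmul_eq_mul]
      _ ≤ (2:ℝ)^k * εs k := by
          refine mul_le_mul_of_nonneg_right ?_ (hεspos k).le
          have hcard : F.card ≤ 2^k := by
            calc F.card ≤ (Finset.univ : Finset (Fin k → Bool)).card := Finset.card_filter_le _ _
              _ = 2^k := by simp [Fintype.card_fun]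
          exact_mod_cast hcard
      _ = 1/(k+1) := by
          rw [hεs]
          have h2k : (2:ℝ)^k ≠ 0 := by positivity
          field_simp
          rw [← mul_pow]; norm_num
  -- complement measures
  have hsplit : ∀ k (A : Set X), MeasurableSet A →
      (μ ((E \ B k) ∩ A)).toReal = (μ (E ∩ A)).toReal - (μ (B k ∩ A)).toReal := by
    intro k A hAm
    have hseteq : (E \ B k) ∩ A = (E ∩ A) \ (B k ∩ A) := by
      ext x
      constructor
      · rintro ⟨⟨hxE, hxB⟩, hxA⟩
        exact ⟨⟨hxE, hxA⟩, fun h => hxB h.1⟩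
      · rintro ⟨⟨hxE, hxA⟩, hxB⟩
        exact ⟨⟨hxE, fun h => hxB ⟨h, hxA⟩⟩, hxA⟩
    have hsub' : B k ∩ A ⊆ E ∩ A := inter_subset_inter_left A (hBsub k)
    rw [hseteq, measure_diff hsub' ((hBm k).inter hAm).nullMeasurableSet (measure_ne_top _ _),
      ENNReal.toReal_sub_of_le (measure_mono hsub') (measure_ne_top _ _)]
  set Φ : ℕ → Set X → ℝ :=
    fun k A => (μ (B k ∩ A)).toReal - (μ ((E \ B k) ∩ A)).toReal with hΦ
  have hΦeq : ∀ k (A : Set X), MeasurableSet A →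
      Φ k A = 2 * (μ (B k ∩ A)).toReal - (μ (E ∩ A)).toReal := by
    intro k A hAm
    rw [hΦ]
    simp only
    rw [hsplit k A hAm]
    ring
  -- convergence on the generating sets
  have hΦS : ∀ n : ℕ, Tendsto (fun k => Φ k (S n)) atTop (𝓝 0) := by
    intro n
    have hb : ∀ᶠ k in atTop, ‖Φ k (S n)‖ ≤ 2 * (1/(k+1)) := by
      filter_upwards [eventually_ge_atTop (n+1)] with k hk
      have hik : n < k := hk
      have := hkey k ⟨n, hik⟩
      rw [Real.norm_eq_abs, hΦeq k (S n) (hSmeas n)]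
      rw [abs_le] at this ⊢
      constructor <;> [linarith [this.1]; linarith [this.2]]
    have hg : Tendsto (fun k : ℕ => 2 * (1/((k:ℝ)+1))) atTop (𝓝 0) := by
      have := tendsto_one_div_add_atTop_nhds_zero_nat (𝕜 := ℝ)
      simpa using this.const_mul 2
    exact squeeze_zero_norm' hb hg
  -- comparison across symmetric differences
  have hcmp : ∀ (C A A' : Set X),
      |(μ (C ∩ A)).toReal - (μ (C ∩ A')).toReal| ≤ (μ ((A \ A') ∪ (A' \ A))).toReal := by
    intro C A A'
    have key : ∀ T T' : Set X, μ (C ∩ T) ≤ μ (C ∩ T') + μ ((T \ T') ∪ (T' \ T)) := by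
      intro T T'
      refine le_trans (measure_mono ?_) (measure_union_le _ _)
      intro x ⟨hxC, hxT⟩
      by_cases h : x ∈ T'
      · exact Or.inl ⟨hxC, h⟩
      · exact Or.inr (Or.inl ⟨hxT, h⟩)
    have tkey : ∀ T T' : Set X, (μ (C ∩ T)).toReal ≤ (μ (C ∩ T')).toReal + (μ ((T \ T') ∪ (T' \ T))).toReal := by
      intro T T'
      have := ENNReal.toReal_mono
        (ENNReal.add_ne_top.mpr ⟨measure_ne_top _ _, measure_ne_top _ _⟩) (key T T')
      rwa [ENNReal.toReal_add (measure_ne_top _ _) (measure_ne_top _ _)] at this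
    have hsymm : ((A' \ A) ∪ (A \ A')) = ((A \ A') ∪ (A' \ A)) := union_comm _ _
    rw [abs_sub_le_iff]
    constructor
    · linarith [tkey A A']
    · have := tkey A' A
      rw [hsymm] at this
      linarith
  -- convergence on all measurable sets
  have hΦA : ∀ A : Set X, MeasurableSet A → Tendsto (fun k => Φ k A) atTop (𝓝 0) := by
    intro A hAm
    rw [Metric.tendsto_atTop]
    intro ε hε
    obtain ⟨n, hn⟩ := hSapprox A hAm (ENNReal.ofReal (ε/3)) (ENNReal.ofReal_pos.mpr (by linarith))
    have hΔ : (μ ((A \ S n) ∪ (S n \ A))).toReal ≤ ε/3 :=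
      ENNReal.toReal_le_of_le_ofReal (by linarith) hn.le
    obtain ⟨N, hN⟩ := Metric.tendsto_atTop.mp (hΦS n) (ε/6) (by linarith)
    refine ⟨N, fun k hk => ?_⟩
    have h1 := hcmp (B k) A (S n)
    have h2 := hcmp (E \ B k) A (S n)
    have h3 := hN k hk
    rw [Real.dist_eq, sub_zero] at h3 ⊢
    have h4 : |Φ k A - Φ k (S n)| ≤ 2 * (ε/3) := by
      rw [hΦ]
      simp only
      calc |(μ (B k ∩ A)).toReal - (μ ((E \ B k) ∩ A)).toReal -
            ((μ (B k ∩ S n)).toReal - (μ ((E \ B k) ∩ S n)).toReal)|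
          ≤ |(μ (B k ∩ A)).toReal - (μ (B k ∩ S n)).toReal| +
            |(μ ((E \ B k) ∩ A)).toReal - (μ ((E \ B k) ∩ S n)).toReal| := by
            have hring : (μ (B k ∩ A)).toReal - (μ ((E \ B k) ∩ A)).toReal -
                ((μ (B k ∩ S n)).toReal - (μ ((E \ B k) ∩ S n)).toReal)
                = ((μ (B k ∩ A)).toReal - (μ (B k ∩ S n)).toReal) +
                  (-(((μ ((E \ B k) ∩ A)).toReal - (μ ((E \ B k) ∩ S n)).toReal))) := by ring
            rw [hring]
            have habs := abs_add_le ((μ (B k ∩ A)).toReal - (μ (B k ∩ S n)).toReal)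
              (-(((μ ((E \ B k) ∩ A)).toReal - (μ ((E \ B k) ∩ S n)).toReal)))
            rwa [abs_neg] at habs
        _ ≤ 2 * (ε/3) := by linarith
    calc |Φ k A| ≤ |Φ k A - Φ k (S n)| + |Φ k (S n)| := by
          have := abs_add_le (Φ k A - Φ k (S n)) (Φ k (S n))
          simpa using this
      _ < ε := by linarith
  -- the oscillating sign functions
  set sfun : ℕ → X → ℝ := fun k x =>
    (B k).indicator (fun _ => (1:ℝ)) x - (E \ B k).indicator (fun _ => (1:ℝ)) x with hsfun
  have hsm : ∀ k, Measurable (sfun k) := by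
    intro k
    exact (measurable_const.indicator (hBm k)).sub
      (measurable_const.indicator (hE.diff (hBm k)))
  have habs : ∀ k x, |sfun k x| = E.indicator (fun _ => (1:ℝ)) x := by
    intro k x
    by_cases hxB : x ∈ B k
    · have hxE : x ∈ E := hBsub k hxB
      have hxD : x ∉ E \ B k := fun h => h.2 hxB
      simp [hsfun, Set.indicator_of_mem, Set.indicator_of_notMem, hxB, hxE, hxD]
    · by_cases hxE : x ∈ E
      · have hxD : x ∈ E \ B k := ⟨hxE, hxB⟩
        simp [hsfun, Set.indicator_of_mem, Set.indicator_of_notMem, hxB, hxE, hxD]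
      · have hxD : x ∉ E \ B k := fun h => hxE h.1
        simp [hsfun, Set.indicator_of_notMem, hxB, hxE, hxD]
  have hsbd : ∀ k x, ‖sfun k x‖ ≤ 1 := by
    intro k x
    rw [Real.norm_eq_abs, habs k x]
    by_cases hxE : x ∈ E <;> simp [Set.indicator_apply, hxE]
  -- the basic integral identity
  have hint : ∀ (k : ℕ) (A : Set X), MeasurableSet A → ∀ c : ℝ,
      (∫ x, sfun k x * A.indicator (fun _ => c) x ∂μ) = c * Φ k A := by
    intro k A hAm c
    have hfe : (fun x => sfun k x * A.indicator (fun _ => c) x)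
        = fun x => c • ((B k ∩ A).indicator (fun _ => (1:ℝ)) x
            - ((E \ B k) ∩ A).indicator (fun _ => (1:ℝ)) x) := by
      funext x
      simp only [hsfun, Set.indicator_apply, Set.mem_inter_iff, Set.mem_diff, smul_eq_mul]
      by_cases h1 : x ∈ B k
      · have h2 : x ∈ E := hBsub k h1
        by_cases h3 : x ∈ A <;> simp [h1, h2, h3] <;> ring
      · by_cases h2 : x ∈ E <;> by_cases h3 : x ∈ A <;> simp [h1, h2, h3] <;> ring
    rw [hfe, integral_smul]
    have hi1 : Integrable ((B k ∩ A).indicator (fun _ => (1:ℝ))) μ :=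
      (integrable_const (1:ℝ)).indicator ((hBm k).inter hAm)
    have hi2 : Integrable (((E \ B k) ∩ A).indicator (fun _ => (1:ℝ))) μ :=
      (integrable_const (1:ℝ)).indicator ((hE.diff (hBm k)).inter hAm)
    rw [integral_sub hi1 hi2, integral_indicator_const (1:ℝ) ((hBm k).inter hAm),
      integral_indicator_const (1:ℝ) ((hE.diff (hBm k)).inter hAm)]
    simp [hΦ, smul_eq_mul, Measure.real]
  -- weak-* convergence of the oscillations against every integrable function
  have hIf : ∀ (w : X → ℝ), Integrable w μ → ∀ k, Integrable (fun x => sfun k x * w x) μ :=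
    fun w hw k => hw.bdd_mul (hsm k).aestronglyMeasurable (Filter.Eventually.of_forall (hsbd k))
  have hweak0 : ∀ w : X → ℝ, Integrable w μ →
      Tendsto (fun k => ∫ x, sfun k x * w x ∂μ) atTop (𝓝 0) := by
    have h_ind : ∀ (c : ℝ) ⦃A : Set X⦄, MeasurableSet A → μ A < ⊤ →
        Tendsto (fun k => ∫ x, sfun k x * (A.indicator (fun _ => c)) x ∂μ) atTop (𝓝 0) := by
      intro c A hAm _
      have heq : (fun k => ∫ x, sfun k x * (A.indicator (fun _ => c)) x ∂μ)
          = fun k => c * Φ k A := funext fun k => hint k A hAm c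
      rw [heq]
      simpa using (hΦA A hAm).const_mul c
    have h_add : ∀ ⦃f g : X → ℝ⦄, Disjoint (Function.support f) (Function.support g) →
        Integrable f μ → Integrable g μ →
        Tendsto (fun k => ∫ x, sfun k x * f x ∂μ) atTop (𝓝 0) →
        Tendsto (fun k => ∫ x, sfun k x * g x ∂μ) atTop (𝓝 0) →
        Tendsto (fun k => ∫ x, sfun k x * (f + g) x ∂μ) atTop (𝓝 0) := by
      intro f g _ hf hg Pf Pg
      have heq : (fun k => ∫ x, sfun k x * (f + g) x ∂μ)
          = fun k => (∫ x, sfun k x * f x ∂μ) + ∫ x, sfun k x * g x ∂μ := by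
        funext k
        rw [← integral_add (hIf f hf k) (hIf g hg k)]
        congr 1
        funext x
        simp only [Pi.add_apply]
        ring
      rw [heq]
      simpa using Pf.add Pg
    have h_closed : IsClosed {f : X →₁[μ] ℝ |
        Tendsto (fun k => ∫ x, sfun k x * f x ∂μ) atTop (𝓝 0)} := by
      refine IsSeqClosed.isClosed ?_
      intro fs f hfs hlim
      simp only [Set.mem_setOf_eq] at hfs ⊢
      rw [NormedAddCommGroup.tendsto_nhds_zero]
      intro ε hε
      obtain ⟨N, hN⟩ := Metric.tendsto_atTop.mp hlim (ε/2) (by linarith)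
      have hNN := hN N le_rfl
      have hdist : (∫ x, ‖f x - fs N x‖ ∂μ) < ε/2 := by
        have h1 : dist (fs N) f = ‖fs N - f‖ := dist_eq_norm _ _
        have h2 : ‖fs N - f‖ = ∫ x, ‖(fs N - f : X →₁[μ] ℝ) x‖ ∂μ := L1.norm_eq_integral_norm _
        have h3 : (∫ x, ‖(fs N - f : X →₁[μ] ℝ) x‖ ∂μ) = ∫ x, ‖f x - fs N x‖ ∂μ := by
          refine integral_congr_ae ?_
          filter_upwards [Lp.coeFn_sub (fs N) f] with x hx
          rw [hx]
          simp [norm_sub_rev]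
        rw [← h3, ← h2, ← h1]
        exact hNN
      have hfint : Integrable (⇑f) μ := L1.integrable_coeFn f
      have hfsint : Integrable (⇑(fs N)) μ := L1.integrable_coeFn (fs N)
      have hkey2 : ∀ k, ‖(∫ x, sfun k x * f x ∂μ) - ∫ x, sfun k x * fs N x ∂μ‖
          ≤ ∫ x, ‖f x - fs N x‖ ∂μ := by
        intro k
        rw [← integral_sub (hIf _ hfint k) (hIf _ hfsint k)]
        have he : (fun x => sfun k x * f x - sfun k x * fs N x)
            = fun x => sfun k x * (f x - fs N x) := by funext x; ring
        rw [he]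
        refine le_trans (norm_integral_le_integral_norm _) ?_
        refine integral_mono ((hIf _ (hfint.sub hfsint) k).norm) ((hfint.sub hfsint).norm) ?_
        intro x
        simp only [norm_mul]
        calc ‖sfun k x‖ * ‖f x - fs N x‖ ≤ 1 * ‖f x - fs N x‖ :=
              mul_le_mul_of_nonneg_right (hsbd k x) (norm_nonneg _)
          _ = ‖f x - fs N x‖ := one_mul _
      have hev : ∀ᶠ k in atTop, ‖∫ x, sfun k x * fs N x ∂μ‖ < ε/2 :=
        (NormedAddCommGroup.tendsto_nhds_zero.mp (hfs N)) (ε/2) (by linarith)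
      filter_upwards [hev] with k hk
      calc ‖∫ x, sfun k x * f x ∂μ‖
          ≤ ‖(∫ x, sfun k x * f x ∂μ) - ∫ x, sfun k x * fs N x ∂μ‖
            + ‖∫ x, sfun k x * fs N x ∂μ‖ := by
            have := norm_add_le ((∫ x, sfun k x * f x ∂μ) - ∫ x, sfun k x * fs N x ∂μ)
              (∫ x, sfun k x * fs N x ∂μ)
            simpa using this
        _ < ε/2 + ε/2 := add_lt_add_of_le_of_lt (le_trans (hkey2 k) hdist.le) hk
        _ = ε := by ring
    have h_ae : ∀ ⦃f g : X → ℝ⦄, f =ᵐ[μ] g → Integrable f μ →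
        Tendsto (fun k => ∫ x, sfun k x * f x ∂μ) atTop (𝓝 0) →
        Tendsto (fun k => ∫ x, sfun k x * g x ∂μ) atTop (𝓝 0) := by
      intro f g hfg _ Pf
      have heq : (fun k => ∫ x, sfun k x * g x ∂μ)
          = fun k => ∫ x, sfun k x * f x ∂μ := by
        funext k
        refine integral_congr_ae ?_
        filter_upwards [hfg] with x hx
        rw [hx]
      rw [heq]
      exact Pf
    intro w hw
    exact Integrable.induction
      (P := fun w => Tendsto (fun k => ∫ x, sfun k x * w x ∂μ) atTop (𝓝 0))
      h_ind h_add h_closed h_ae hw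
  -- the competitor sequence
  set u : ℕ → X → ℝ := fun k x => ubar x + ρ * sfun k x with hu
  have humem : ∀ k, u k ∈ Uad μ α β := by
    intro k
    refine ⟨hubar_meas.add (measurable_const.mul (hsm k)), ?_⟩
    filter_upwards [hubar_ae] with x hx
    by_cases hxE : x ∈ E
    · have hxE' : α + c₀ ≤ ubar x ∧ ubar x ≤ β - c₀ := hxE
      have h1 : |ρ * sfun k x| ≤ ρ := by
        have hsb : |sfun k x| ≤ 1 := by rw [← Real.norm_eq_abs]; exact hsbd k x
        rw [abs_mul, abs_of_pos hρpos]
        nlinarith [abs_nonneg (sfun k x)]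
      have h2 := abs_le.mp h1
      simp only [hu]
      constructor
      · linarith [hxE'.1, h2.1, hρc₀]
      · linarith [hxE'.2, h2.2, hρc₀]
    · have hxB : x ∉ B k := fun h => hxE (hBsub k h)
      have hxD : x ∉ E \ B k := fun h => hxE h.1
      have hs0 : sfun k x = 0 := by
        simp [hsfun, Set.indicator_of_notMem, hxB, hxD]
      simp only [hu, hs0, mul_zero, add_zero]
      exact hx
  -- L¹ distance of the competitors
  have hL1 : ∀ k, (∫ x, |u k x - ubar x| ∂μ) < δ := by
    intro k
    have heq : (fun x => |u k x - ubar x|) = fun x => E.indicator (fun _ => ρ) x := by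
      funext x
      simp only [hu]
      have h0 : ubar x + ρ * sfun k x - ubar x = ρ * sfun k x := by ring
      rw [h0, abs_mul, abs_of_pos hρpos, habs k x]
      by_cases hxE : x ∈ E <;> simp [Set.indicator_apply, hxE]
    rw [heq, integral_indicator_const ρ hE, smul_eq_mul]
    calc (μ E).toReal * ρ = ρ * (μ E).toReal := mul_comm _ _
      _ < δ := hρδ
  -- the Lᵖ norm of the perturbation is a fixed positive constant
  have hnorm : ∀ k, eLpNorm (fun x => u k x - ubar x) p μ
      = eLpNorm (E.indicator (fun _ => ρ)) p μ := by
    intro k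
    refine eLpNorm_congr_norm_ae (Filter.Eventually.of_forall fun x => ?_)
    simp only [hu]
    have h0 : ubar x + ρ * sfun k x - ubar x = ρ * sfun k x := by ring
    rw [h0, Real.norm_eq_abs, Real.norm_eq_abs, abs_mul, abs_of_pos hρpos, habs k x]
    by_cases hxE : x ∈ E <;> simp [Set.indicator_apply, hxE, abs_of_pos hρpos]
  set K : ℝ := (eLpNorm (E.indicator (fun _ => ρ)) p μ).toReal with hK
  have hp0 : p ≠ 0 := by intro h; rw [h] at hp; simp at hp
  have hKpos : 0 < K := by
    refine ENNReal.toReal_pos ?_ ?_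
    · intro h0
      have hmeas : AEStronglyMeasurable (E.indicator (fun _ => ρ)) μ :=
        (measurable_const.indicator hE).aestronglyMeasurable
      have hzero := (eLpNorm_eq_zero_iff hmeas hp0).mp h0
      have h' : ∀ᵐ x ∂μ, E.indicator (fun _ => ρ) x = 0 := by
        filter_upwards [hzero] with x hx
        simpa using hx
      have hnull := ae_iff.mp h'
      have hsubset : E ⊆ {x | ¬ E.indicator (fun _ => ρ) x = 0} := by
        intro x hxE
        simp only [Set.mem_setOf_eq, Set.indicator_of_mem hxE]
        exact ne_of_gt hρpos
      exact absurd (measure_mono_null hsubset hnull) (by simpa using ne_of_gt hEpos)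
    · have hb : eLpNorm (E.indicator (fun _ => ρ)) p μ
          ≤ μ Set.univ ^ p.toReal⁻¹ * ENNReal.ofReal ρ := by
        refine eLpNorm_le_of_ae_bound (Filter.Eventually.of_forall fun x => ?_)
        rw [Real.norm_eq_abs]
        by_cases hxE : x ∈ E <;> simp [Set.indicator_apply, hxE, abs_of_pos hρpos, hρpos.le]
      refine ne_of_lt (lt_of_le_of_lt hb ?_)
      exact ENNReal.mul_lt_top
        (ENNReal.rpow_lt_top_of_nonneg (by positivity) (measure_ne_top μ _))
        ENNReal.ofReal_lt_top
  have hKγ : 0 < ν * K ^ γ := mul_pos hν (Real.rpow_pos_of_pos hKpos γ)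
  have hJk : ∀ k, J ubar + ν * K ^ γ ≤ J (u k) := by
    intro k
    have := hgrow (u k) (humem k) (hL1 k)
    rwa [hnorm k, ← hK] at this
  -- weak-* convergence of the competitors
  have hweak : ∀ w : X → ℝ, Integrable w μ →
      Tendsto (fun k => ∫ x, u k x * w x ∂μ) atTop (𝓝 (∫ x, ubar x * w x ∂μ)) := by
    intro w hw
    have hubw : Integrable (fun x => ubar x * w x) μ := by
      refine Integrable.mono' (hw.norm.const_mul (max |α| |β|))
        (hubar_meas.aestronglyMeasurable.mul hw.aestronglyMeasurable) ?_
      filter_upwards [hubar_ae] with x hx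
      rw [norm_mul]
      have hb : ‖ubar x‖ ≤ max |α| |β| := by
        rw [Real.norm_eq_abs, abs_le]
        constructor
        · have h1 := neg_abs_le α
          have h2 := le_max_left |α| |β|
          linarith [hx.1]
        · have h1 := le_abs_self β
          have h2 := le_max_right |α| |β|
          linarith [hx.2]
      exact mul_le_mul_of_nonneg_right hb (norm_nonneg _)
    have heq : (fun k => ∫ x, u k x * w x ∂μ)
        = fun k => (∫ x, ubar x * w x ∂μ) + ρ * ∫ x, sfun k x * w x ∂μ := by
      funext k
      rw [← integral_const_mul, ← integral_add hubw ((hIf w hw k).const_mul ρ)]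
      congr 1
      funext x
      simp only [hu]
      ring
    rw [heq]
    have h2 := (hweak0 w hw).const_mul ρ
    simpa using tendsto_const_nhds.add h2
  have hJtend := hJcont u ubar humem ⟨hubar_meas, hubar_ae⟩ hweak
  have hev : ∀ᶠ k in atTop, J (u k) < J ubar + ν * K ^ γ :=
    hJtend.eventually_lt_const (by linarith)
  obtain ⟨k, hk⟩ := hev.exists
  linarith [hJk k]
end

section
/- Let (X,B,η) be a finite measure space and ū ∈ U_ad = {u ∈ L^∞(X) : α ≤ u ≤ β a.e.}. Suppose ψ̄ ∈ L^1(X) satisfies the first-order condition ∫_X ψ̄ (u − ū) dη ≥ 0 for all u ∈ U_ad, and the structural assumption η({x ∈ X : |ψ̄(x)| ≤ ε}) ≤ K ε for all ε > 0 and some K > 0. Then for all u ∈ U_ad: ∫_X ψ̄ (u − ū) dη ≥ κ ‖u − ū‖_{L^1(X)}² with κ = 1/(4(β − α)K). -/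
open MeasureTheory Filter Topology
open scoped ENNReal

/-- Auxiliary integrability: a boundedly a.e.-bounded function and its product with
an integrable function are integrable on a finite measure space. -/
lemma aux_integrable {X : Type*} [MeasurableSpace X] (μ : Measure X) [IsFiniteMeasure μ]
    (ψ w : X → ℝ) (hψ : Integrable ψ μ) (hw : AEStronglyMeasurable w μ) (C : ℝ)
    (hbd : ∀ᵐ x ∂μ, |w x| ≤ C) :
    Integrable w μ ∧ Integrable (fun x => ψ x * w x) μ := by
  constructor
  · refine (integrable_const C).mono' hw ?_
    filter_upwards [hbd] with x h
    simpa using h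
  · refine ((hψ.norm).const_mul C).mono' (hψ.aestronglyMeasurable.mul hw) ?_
    filter_upwards [hbd] with x h
    have : ‖ψ x * w x‖ = ‖ψ x‖ * |w x| := by
      simp [abs_mul]
    rw [this]
    calc ‖ψ x‖ * |w x| ≤ ‖ψ x‖ * C := by
          exact mul_le_mul_of_nonneg_left h (norm_nonneg _)
      _ = C * ‖ψ x‖ := by ring

/-- the first-order optimality condition together with the structural
assumption on `ψ̄` implies first-order quadratic growth of `J′(ū)(u − ū)` in `L¹`. -/
theorem first_order_quadratic_growth
    {X : Type*} [MeasurableSpace X] (μ : Measure X) [IsFiniteMeasure μ]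
    (α β : ℝ) (hαβ : α < β)
    (ubar : X → ℝ) (hubar : ubar ∈ Uad μ α β)
    (ψ : X → ℝ) (hψ : Integrable ψ μ)
    (hFOC : ∀ u ∈ Uad μ α β, 0 ≤ ∫ x, ψ x * (u x - ubar x) ∂μ)
    (K : ℝ) (hK : 0 < K)
    (hstruct : ∀ ε : ℝ, 0 < ε → μ {x | |ψ x| ≤ ε} ≤ ENNReal.ofReal (K * ε)) :
    ∀ u ∈ Uad μ α β,
      (1 / (4 * (β - α) * K)) * (∫ x, |u x - ubar x| ∂μ) ^ 2
        ≤ ∫ x, ψ x * (u x - ubar x) ∂μ := by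
  intro u hu
  have hβα : (0:ℝ) < β - α := by linarith
  obtain ⟨hum, hubd⟩ := hu
  obtain ⟨hbm, hbbd⟩ := hubar
  -- measurable version of ψ
  set ψ' := hψ.1.mk ψ with hψ'def
  have hψ'meas : Measurable ψ' := hψ.1.stronglyMeasurable_mk.measurable
  have hψψ' : ψ =ᵐ[μ] ψ' := hψ.1.ae_eq_mk
  -- the pointwise minimizer
  set ustar : X → ℝ := fun x => if 0 ≤ ψ' x then α else β with hustar_def
  have hustar_mem : ustar ∈ Uad μ α β := by
    constructor
    · exact Measurable.ite (measurableSet_le measurable_const hψ'meas)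
        measurable_const measurable_const
    · refine Eventually.of_forall fun x => ?_
      by_cases h : 0 ≤ ψ' x <;> simp [ustar, h, hαβ.le]
  -- integrability facts
  have hustar_bd : ∀ᵐ x ∂μ, |ustar x - ubar x| ≤ β - α := by
    filter_upwards [hbbd] with x ⟨h1, h2⟩
    have : α ≤ ustar x ∧ ustar x ≤ β := by
      by_cases h : 0 ≤ ψ' x <;> simp [ustar, h, hαβ.le]
    refine abs_le.2 ⟨by linarith [this.2], by linarith [this.1]⟩
  have hustar_int := aux_integrable μ ψ (fun x => ustar x - ubar x) hψ
    ((hustar_mem.1.sub hbm).aestronglyMeasurable) (β - α) hustar_bd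
  have hv_bd : ∀ᵐ x ∂μ, |u x - ubar x| ≤ β - α := by
    filter_upwards [hbbd, hubd] with x ⟨h1, h2⟩ ⟨h3, h4⟩
    exact abs_le.2 ⟨by linarith, by linarith⟩
  have hv_int := aux_integrable μ ψ (fun x => u x - ubar x) hψ
    ((hum.sub hbm).aestronglyMeasurable) (β - α) hv_bd
  -- the minimizer integrand is nonpositive a.e.
  have hg_nonpos : (fun x => ψ x * (ustar x - ubar x)) ≤ᵐ[μ] 0 := by
    filter_upwards [hψψ', hbbd] with x hx ⟨h1, h2⟩
    by_cases h : 0 ≤ ψ' x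
    · have hψx : 0 ≤ ψ x := hx ▸ h
      simp only [ustar, if_pos h, Pi.zero_apply]
      exact mul_nonpos_of_nonneg_of_nonpos hψx (by linarith)
    · have hψx : ψ x < 0 := hx ▸ (not_le.1 h)
      simp only [ustar, if_neg h, Pi.zero_apply]
      exact mul_nonpos_of_nonpos_of_nonneg hψx.le (by linarith)
  -- hence it vanishes a.e.
  have hg_zero : (fun x => ψ x * (ustar x - ubar x)) =ᵐ[μ] 0 := by
    have h1 : (0:ℝ) ≤ ∫ x, ψ x * (ustar x - ubar x) ∂μ := hFOC ustar hustar_mem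
    have h2 : ∫ x, ψ x * (ustar x - ubar x) ∂μ ≤ 0 := integral_nonpos_of_ae hg_nonpos
    have hint2 : Integrable (fun x => -(ψ x * (ustar x - ubar x))) μ :=
      hustar_int.2.neg
    have h3 : ∫ x, -(ψ x * (ustar x - ubar x)) ∂μ = 0 := by
      rw [integral_neg]; linarith
    have h4 : (fun x => -(ψ x * (ustar x - ubar x))) =ᵐ[μ] 0 :=
      (integral_eq_zero_iff_of_nonneg_ae
        (by filter_upwards [hg_nonpos] with x hx; simpa using hx) hint2).1 h3
    filter_upwards [h4] with x hx
    simpa using congrArg Neg.neg hx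
  -- structural pointwise consequence
  have hstruct_pt : ∀ᵐ x ∂μ, (0 < ψ x → ubar x = α) ∧ (ψ x < 0 → ubar x = β) := by
    filter_upwards [hg_zero, hψψ'] with x hx hx'
    by_cases h : 0 ≤ ψ' x
    · have h0 : ψ x * (α - ubar x) = 0 := by simpa [ustar, if_pos h] using hx
      constructor
      · intro hpos
        rcases mul_eq_zero.1 h0 with h' | h'
        · exact absurd h' (ne_of_gt hpos)
        · linarith
      · intro hneg
        exact absurd (hx' ▸ h) (not_le.2 hneg)
    · have h0 : ψ x * (β - ubar x) = 0 := by simpa [ustar, if_neg h] using hx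
      have hψx : ψ x < 0 := hx' ▸ (not_le.1 h)
      exact ⟨fun hpos => absurd hpos (not_lt.2 hψx.le), fun _ => by
        rcases mul_eq_zero.1 h0 with h' | h'
        · exact absurd h' (ne_of_lt hψx)
        · linarith⟩
  -- sign condition
  have hsign : ∀ᵐ x ∂μ, 0 ≤ ψ x * (u x - ubar x) := by
    filter_upwards [hstruct_pt, hubd] with x ⟨hp, hn⟩ ⟨h3, h4⟩
    rcases lt_trichotomy (ψ x) 0 with h | h | h
    · have hb := hn h
      have h5 : u x - ubar x ≤ 0 := by rw [hb]; linarith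
      nlinarith
    · simp [h]
    · have := hp h
      exact mul_nonneg h.le (by linarith)
  set d := ∫ x, |u x - ubar x| ∂μ with hd
  have hd0 : 0 ≤ d := integral_nonneg fun x => abs_nonneg _
  rcases eq_or_lt_of_le hd0 with hdz | hdpos
  · rw [← hdz]
    simpa using hFOC u ⟨hum, hubd⟩
  · -- main case: d > 0
    set ε := d / (2 * (β - α) * K) with hε
    have hεpos : 0 < ε := by positivity
    set S := {x | |ψ' x| ≤ ε} with hS
    have hSmeas : MeasurableSet S := measurableSet_le hψ'meas.abs measurable_const
    have hμS : (μ S).toReal ≤ K * ε := by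
      have hcong : μ S = μ {x | |ψ x| ≤ ε} := by
        refine measure_congr ?_
        rw [Filter.eventuallyEq_set]
        filter_upwards [hψψ'] with x hx
        simp [S, hx]
      rw [hcong]
      exact ENNReal.toReal_le_of_le_ofReal (by positivity) (hstruct ε hεpos)
    -- pointwise inequality
    have hpt : ∀ᵐ x ∂μ, ε * |u x - ubar x| ≤
        ψ x * (u x - ubar x) + S.indicator (fun _ => ε * (β - α)) x := by
      filter_upwards [hstruct_pt, hψψ', hubd, hv_bd, hsign] with x ⟨hp, hn⟩ hx ⟨h3, h4⟩ hvb hsgn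
      by_cases hxS : x ∈ S
      · rw [Set.indicator_of_mem hxS]
        have h1 : ε * |u x - ubar x| ≤ ε * (β - α) :=
          mul_le_mul_of_nonneg_left hvb hεpos.le
        linarith
      · rw [Set.indicator_of_notMem hxS]
        have hbig : ε < |ψ x| := by
          have h' : ε < |ψ' x| := lt_of_not_ge fun hc => hxS hc
          rwa [← hx] at h'
        rw [add_zero]
        rcases lt_abs.1 hbig with hpos | hneg
        · have hbb : ubar x = α := hp (lt_trans hεpos hpos)
          have hv0 : 0 ≤ u x - ubar x := by rw [hbb]; linarith
          rw [abs_of_nonneg hv0]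
          exact mul_le_mul_of_nonneg_right hpos.le hv0
        · have hψneg : ψ x < 0 := by linarith
          have hbb : ubar x = β := hn hψneg
          have hv0 : u x - ubar x ≤ 0 := by rw [hbb]; linarith
          rw [abs_of_nonpos hv0]
          nlinarith
    -- integrate the pointwise inequality
    have hInd_int : Integrable (S.indicator fun _ => ε * (β - α)) μ :=
      (integrable_const _).indicator hSmeas
    have hmono : ∫ x, ε * |u x - ubar x| ∂μ ≤
        ∫ x, (ψ x * (u x - ubar x) + S.indicator (fun _ => ε * (β - α)) x) ∂μ :=
      integral_mono_ae ((hv_int.1.abs).const_mul ε) (hv_int.2.add hInd_int) hpt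
    rw [integral_const_mul, integral_add hv_int.2 hInd_int,
      integral_indicator_const _ hSmeas, smul_eq_mul, measureReal_def] at hmono
    have hfin : (μ S).toReal * (ε * (β - α)) ≤ (K * ε) * (ε * (β - α)) :=
      mul_le_mul_of_nonneg_right hμS (by positivity)
    have hkey : (1 / (4 * (β - α) * K)) * d ^ 2 = ε * d - (K * ε) * (ε * (β - α)) := by
      rw [hε]
      field_simp
      ring
    linarith
end

section
/- Let (X,B,η) be a finite measure space and ū ∈ U_ad = {u ∈ L^∞(X) : α ≤ u ≤ β a.e.}. Suppose ψ̄ ∈ L^1(X) satisfies ∫_X ψ̄ (u − ū) dη ≥ 0 for all u ∈ U_ad and η({|ψ̄| ≤ ε}) ≤ K ε for all ε > 0 with some K > 0. Then ū is bang-bang, i.e., ū(x) ∈ {α, β} for almost every x ∈ X. -/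
open MeasureTheory Filter Topology
open scoped ENNReal

/-- the first-order optimality condition together with the structural
assumption on `ψ̄` implies that `ū` is bang-bang. -/
theorem bang_bang_of_structural_assumption
    {X : Type*} [MeasurableSpace X] (μ : Measure X) [IsFiniteMeasure μ]
    (α β : ℝ) (hαβ : α < β)
    (ubar : X → ℝ) (hubar : ubar ∈ Uad μ α β)
    (ψ : X → ℝ) (hψ : Integrable ψ μ)
    (hFOC : ∀ u ∈ Uad μ α β, 0 ≤ ∫ x, ψ x * (u x - ubar x) ∂μ)
    (K : ℝ) (hK : 0 < K)
    (hstruct : ∀ ε : ℝ, 0 < ε → μ {x | |ψ x| ≤ ε} ≤ ENNReal.ofReal (K * ε)) :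
    ∀ᵐ x ∂μ, ubar x = α ∨ ubar x = β := by
  obtain ⟨hmeas, hbd⟩ := hubar
  -- measurable representative of ψ
  set ψ' : X → ℝ := (hψ.aestronglyMeasurable.mk ψ) with hψ'def
  have hψ'meas : Measurable ψ' := hψ.aestronglyMeasurable.stronglyMeasurable_mk.measurable
  have hψeq : ψ =ᵐ[μ] ψ' := hψ.aestronglyMeasurable.ae_eq_mk
  -- the bang-bang competitor
  set u : X → ℝ := fun x => if 0 < ψ' x then α else if ψ' x < 0 then β else ubar x with hudef
  have humeas : Measurable u := by
    apply Measurable.ite (measurableSet_lt measurable_const hψ'meas) measurable_const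
    exact Measurable.ite (measurableSet_lt hψ'meas measurable_const) measurable_const hmeas
  have huUad : u ∈ Uad μ α β := by
    refine ⟨humeas, ?_⟩
    filter_upwards [hbd] with x ⟨h1, h2⟩
    simp only [hudef]
    split_ifs <;> constructor <;> linarith
  have hint : Integrable (fun x => ψ x * (u x - ubar x)) μ := by
    refine Integrable.mono' (hψ.abs.const_mul (β - α))
      (hψ.aestronglyMeasurable.mul ((humeas.sub hmeas).aestronglyMeasurable)) ?_
    filter_upwards [hbd, huUad.2] with x ⟨h1, h2⟩ ⟨h3, h4⟩
    rw [Real.norm_eq_abs, abs_mul]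
    have : |u x - ubar x| ≤ β - α := by rw [abs_sub_le_iff]; constructor <;> linarith
    calc |ψ x| * |u x - ubar x| ≤ |ψ x| * (β - α) := by
          exact mul_le_mul_of_nonneg_left this (abs_nonneg _)
      _ = (β - α) * |ψ x| := mul_comm _ _
  have hnonpos : (fun x => ψ x * (u x - ubar x)) ≤ᵐ[μ] 0 := by
    filter_upwards [hbd, hψeq] with x ⟨h1, h2⟩ heq
    simp only [hudef, Pi.zero_apply]
    split_ifs with hpos hneg
    · have : α - ubar x ≤ 0 := by linarith
      have : ψ x > 0 := heq ▸ hpos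
      nlinarith
    · have : β - ubar x ≥ 0 := by linarith
      have : ψ x < 0 := heq ▸ hneg
      nlinarith
    · simp
  -- the integrand vanishes a.e.
  have hzero : (fun x => ψ x * (u x - ubar x)) =ᵐ[μ] 0 := by
    have h1 : (0:ℝ) ≤ ∫ x, ψ x * (u x - ubar x) ∂μ := hFOC u huUad
    have h2 : ∫ x, -(ψ x * (u x - ubar x)) ∂μ = 0 := by
      rw [integral_neg]
      have : ∫ x, ψ x * (u x - ubar x) ∂μ ≤ 0 := integral_nonpos_of_ae hnonpos
      linarith
    have hintneg : Integrable (fun x => -(ψ x * (u x - ubar x))) μ := hint.neg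
    have hpos : 0 ≤ᵐ[μ] fun x => -(ψ x * (u x - ubar x)) := by
      filter_upwards [hnonpos] with x hx
      simp only [Pi.zero_apply] at hx ⊢; linarith
    have h3 : (fun x => -(ψ x * (u x - ubar x))) =ᵐ[μ] 0 :=
      (integral_eq_zero_iff_of_nonneg_ae hpos hintneg).1 h2
    filter_upwards [h3] with x hx
    simp only [Pi.zero_apply] at hx ⊢; linarith
  -- μ {ψ = 0} = 0
  have hnull : μ {x | ψ x = 0} = 0 := by
    have hbound : ∀ ε : ℝ, 0 < ε → μ {x | ψ x = 0} ≤ ENNReal.ofReal (K * ε) := by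
      intro ε hε
      refine le_trans (measure_mono ?_) (hstruct ε hε)
      intro x hx
      simp only [Set.mem_setOf_eq] at hx ⊢
      rw [hx]; simpa using hε.le
    have htend : Tendsto (fun ε : ℝ => ENNReal.ofReal (K * ε)) (𝓝[>] 0) (𝓝 0) := by
      have : Tendsto (fun ε : ℝ => K * ε) (𝓝 0) (𝓝 0) := by
        simpa using (continuous_mul_left K).tendsto (0:ℝ)
      simpa using (ENNReal.tendsto_ofReal (this.mono_left nhdsWithin_le_nhds))
    have := ge_of_tendsto htend (eventually_nhdsWithin_of_forall
      (fun ε (hε : ε ∈ Set.Ioi (0:ℝ)) => hbound ε hε))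
    exact le_antisymm this zero_le
  have hne : ∀ᵐ x ∂μ, ψ x ≠ 0 := by
    rw [ae_iff]; simpa using hnull
  filter_upwards [hzero, hψeq, hne] with x hx heq hψx
  simp only [Pi.zero_apply] at hx
  have huu : u x = ubar x := by
    rcases mul_eq_zero.1 hx with h | h
    · exact absurd h hψx
    · linarith
  have hψ'x : ψ' x ≠ 0 := heq ▸ hψx
  rcases lt_trichotomy (ψ' x) 0 with h | h | h
  · right
    rw [← huu]
    simp only [hudef]
    rw [if_neg (by linarith), if_pos h]
  · exact absurd h hψ'x
  · left
    rw [← huu]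
    simp only [hudef]
    rw [if_pos h]
end

section
/- Discretization error for projection of a bang-bang control: Let ω ⊂ ℝⁿ be a bounded measurable set, ψ̄ : ω̄ → ℝ Lipschitz continuous with constant L̄, satisfying the measure condition |{x ∈ ω : |ψ̄(x)| ≤ ε}| ≤ K ε for all ε > 0. Let ū ∈ L^∞(ω) be bang-bang with ū(x) = α if ψ̄(x) > 0 and ū(x) = β if ψ̄(x) < 0. Let T_h be a partition of a subset ω_h ⊆ ω into measurable cells of diameter at most h, and let u_h be the cellwise-average projection of ū. Then ‖u_h − ū‖_{L^1(ω_h)} ≤ (β − α) K L̄ h. -/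
open MeasureTheory Filter Topology
open scoped ENNReal NNReal

/-- discretization error for the projection of a bang-bang control:
for a bang-bang control `ū` determined by a Lipschitz switching function `ψ̄` satisfying the
structural measure condition, the cellwise-average projection `u_h` on a partition with
cells of diameter at most `h` satisfies `‖u_h − ū‖_{L¹(ω_h)} ≤ (β−α) K L̄ h`. -/
theorem projection_error_bang_bang
    (n : ℕ) (ω : Set (EuclideanSpace ℝ (Fin n)))
    (hωmeas : MeasurableSet ω) (hωbdd : Bornology.IsBounded ω)
    (ψ : EuclideanSpace ℝ (Fin n) → ℝ) (Lb : ℝ≥0)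
    (hLip : LipschitzOnWith Lb ψ (closure ω))
    (K : ℝ) (hK : 0 < K)
    (hmeasure : ∀ ε : ℝ, 0 < ε →
      volume {x ∈ ω | |ψ x| ≤ ε} ≤ ENNReal.ofReal (K * ε))
    (α β : ℝ) (hαβ : α ≤ β)
    (ubar : EuclideanSpace ℝ (Fin n) → ℝ) (hmeas : Measurable ubar)
    (hbb : ∀ x ∈ ω, (0 < ψ x → ubar x = α) ∧ (ψ x < 0 → ubar x = β) ∧
      (ubar x = α ∨ ubar x = β))
    -- the partition T of ω_h = ⋃ i, T i ⊆ ω into cells of diameter ≤ h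
    (ι : Type*) [Countable ι] (T : ι → Set (EuclideanSpace ℝ (Fin n)))
    (hTmeas : ∀ i, MeasurableSet (T i))
    (hTdisj : Pairwise (Function.onFun Disjoint T))
    (hTsub : ∀ i, T i ⊆ ω)
    (hTpos : ∀ i, 0 < volume (T i))
    (h : ℝ) (hh : 0 ≤ h) (hdiam : ∀ i, Metric.diam (T i) ≤ h)
    -- u_h is the cellwise average of ū
    (uh : EuclideanSpace ℝ (Fin n) → ℝ)
    (huh : ∀ i, ∀ x ∈ T i, uh x = (∫ y in T i, ubar y) / (volume (T i)).toReal) :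
    (∫ x in ⋃ i, T i, |uh x - ubar x|) ≤ (β - α) * K * (Lb : ℝ) * h := by
  have hβα : (0:ℝ) ≤ β - α := sub_nonneg.2 hαβ
  have hLb0 : (0:ℝ) ≤ (Lb : ℝ) := Lb.coe_nonneg
  have hRHS0 : (0:ℝ) ≤ (β - α) * K * (Lb : ℝ) * h := by positivity
  by_cases hInt : IntegrableOn (fun x => |uh x - ubar x|) (⋃ i, T i) volume
  swap
  · rw [MeasureTheory.integral_undef hInt]; exact hRHS0
  -- the "bad" set
  set B : Set (EuclideanSpace ℝ (Fin n)) := {x ∈ ω | |ψ x| ≤ (Lb : ℝ) * h} with hBdef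
  have hBmeas : MeasurableSet B := by
    have hcl : IsClosed (closure ω ∩ ψ ⁻¹' Set.Icc (-((Lb : ℝ) * h)) ((Lb : ℝ) * h)) :=
      hLip.continuousOn.preimage_isClosed_of_isClosed isClosed_closure isClosed_Icc
    have : B = ω ∩ (closure ω ∩ ψ ⁻¹' Set.Icc (-((Lb : ℝ) * h)) ((Lb : ℝ) * h)) := by
      ext x
      simp only [hBdef, Set.mem_setOf_eq, Set.mem_inter_iff, Set.mem_preimage, Set.mem_Icc,
        abs_le]
      constructor
      · rintro ⟨hx, h1, h2⟩; exact ⟨hx, subset_closure hx, h1, h2⟩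
      · rintro ⟨hx, -, h1, h2⟩; exact ⟨hx, h1, h2⟩
    rw [this]
    exact hωmeas.inter hcl.measurableSet
  have hωfin : volume ω < ∞ := hωbdd.measure_lt_top
  have hBfin : volume B ≠ ∞ := (lt_of_le_of_lt (measure_mono fun x hx => hx.1) hωfin).ne
  have hTbd : ∀ i, Bornology.IsBounded (T i) := fun i => hωbdd.subset (hTsub i)
  have hTfin : ∀ i, volume (T i) < ∞ :=
    fun i => lt_of_le_of_lt (measure_mono (hTsub i)) hωfin
  have hVpos : ∀ i, 0 < (volume (T i)).toReal :=
    fun i => ENNReal.toReal_pos (hTpos i).ne' (hTfin i).ne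
  -- integrability of ubar on each cell
  have hIu : ∀ i, IntegrableOn ubar (T i) volume := by
    intro i
    refine Integrable.mono'
      ((integrableOn_const (hTfin i).ne) : IntegrableOn (fun _ => max |α| |β|) (T i) volume)
      hmeas.aestronglyMeasurable.restrict ?_
    refine (ae_restrict_iff' (hTmeas i)).2 (Filter.Eventually.of_forall fun x hx => ?_)
    rcases (hbb x (hTsub i hx)).2.2 with h1 | h1 <;> rw [Real.norm_eq_abs, h1]
    · exact le_max_left _ _
    · exact le_max_right _ _
  -- bounds on the average
  have hαle : ∀ i, α * (volume (T i)).toReal ≤ ∫ y in T i, ubar y := by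
    intro i
    have : (∫ _ in T i, α) ≤ ∫ y in T i, ubar y := by
      refine setIntegral_mono_on (integrableOn_const (hTfin i).ne) (hIu i)
        (hTmeas i) fun x hx => ?_
      rcases (hbb x (hTsub i hx)).2.2 with h1 | h1 <;> rw [h1]
      exact hαβ
    rwa [setIntegral_const, smul_eq_mul, mul_comm, measureReal_def] at this
  have hβge : ∀ i, (∫ y in T i, ubar y) ≤ β * (volume (T i)).toReal := by
    intro i
    have : (∫ y in T i, ubar y) ≤ ∫ _ in T i, β := by
      refine setIntegral_mono_on (hIu i) (integrableOn_const (hTfin i).ne)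
        (hTmeas i) fun x hx => ?_
      rcases (hbb x (hTsub i hx)).2.2 with h1 | h1 <;> rw [h1]
      exact hαβ
    rwa [setIntegral_const, smul_eq_mul, mul_comm, measureReal_def] at this
  have hcα : ∀ i, α ≤ (∫ y in T i, ubar y) / (volume (T i)).toReal :=
    fun i => (le_div_iff₀ (hVpos i)).2 (hαle i)
  have hcβ : ∀ i, (∫ y in T i, ubar y) / (volume (T i)).toReal ≤ β :=
    fun i => (div_le_iff₀ (hVpos i)).2 (hβge i)
  -- per-cell bound
  have key : ∀ i, (∫ x in T i, |uh x - ubar x|) ≤ (β - α) * (volume (T i ∩ B)).toReal := by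
    intro i
    have hnn : (0:ℝ) ≤ (β - α) * (volume (T i ∩ B)).toReal :=
      mul_nonneg hβα ENNReal.toReal_nonneg
    by_cases hpos : ∀ x ∈ T i, 0 < ψ x
    · -- ubar = α on the cell, so uh = α there
      have hint : (∫ y in T i, ubar y) = α * (volume (T i)).toReal := by
        rw [setIntegral_congr_fun (hTmeas i)
          (fun y hy => (hbb y (hTsub i hy)).1 (hpos y hy)), setIntegral_const, smul_eq_mul,
          mul_comm, measureReal_def]
      have h0 : ∀ x ∈ T i, |uh x - ubar x| = 0 := by
        intro x hx
        rw [huh i x hx, hint, (hbb x (hTsub i hx)).1 (hpos x hx),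
          mul_div_assoc, div_self (hVpos i).ne', mul_one, sub_self, abs_zero]
      rw [setIntegral_congr_fun (hTmeas i) h0]
      simpa using hnn
    · by_cases hneg : ∀ x ∈ T i, ψ x < 0
      · have hint : (∫ y in T i, ubar y) = β * (volume (T i)).toReal := by
          rw [setIntegral_congr_fun (hTmeas i)
            (fun y hy => (hbb y (hTsub i hy)).2.1 (hneg y hy)), setIntegral_const, smul_eq_mul,
            mul_comm, measureReal_def]
        have h0 : ∀ x ∈ T i, |uh x - ubar x| = 0 := by
          intro x hx
          rw [huh i x hx, hint, (hbb x (hTsub i hx)).2.1 (hneg x hx),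
            mul_div_assoc, div_self (hVpos i).ne', mul_one, sub_self, abs_zero]
        rw [setIntegral_congr_fun (hTmeas i) h0]
        simpa using hnn
      · -- bad cell: ψ takes a nonpositive and a nonnegative value
        push_neg at hpos hneg
        obtain ⟨x₀, hx₀, hx₀le⟩ := hpos
        obtain ⟨x₁, hx₁, hx₁ge⟩ := hneg
        have hsubB : T i ⊆ B := by
          intro z hz
          refine ⟨hTsub i hz, ?_⟩
          have hdistLb : ∀ y ∈ T i, |ψ z - ψ y| ≤ (Lb : ℝ) * h := by
            intro y hy
            have h1 : dist (ψ z) (ψ y) ≤ (Lb : ℝ) * dist z y :=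
              hLip.dist_le_mul z (subset_closure (hTsub i hz)) y
                (subset_closure (hTsub i hy))
            have h2 : dist z y ≤ h :=
              le_trans (Metric.dist_le_diam_of_mem (hTbd i) hz hy) (hdiam i)
            calc |ψ z - ψ y| = dist (ψ z) (ψ y) := (Real.dist_eq _ _).symm
              _ ≤ (Lb : ℝ) * dist z y := h1
              _ ≤ (Lb : ℝ) * h := mul_le_mul_of_nonneg_left h2 hLb0
          rcases le_or_gt 0 (ψ z) with hz0 | hz0
          · rw [abs_of_nonneg hz0]
            have := hdistLb x₀ hx₀
            have h3 : ψ z - ψ x₀ ≤ (Lb : ℝ) * h := (abs_le.1 this).2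
            linarith
          · rw [abs_of_neg hz0]
            have h4 : |ψ x₁ - ψ z| ≤ (Lb : ℝ) * h := by
              have h5 := hdistLb x₁ hx₁
              rwa [abs_sub_comm] at h5
            have h3 : ψ x₁ - ψ z ≤ (Lb : ℝ) * h := (abs_le.1 h4).2
            linarith
        rw [Set.inter_eq_self_of_subset_left hsubB]
        have hb : ∀ x ∈ T i, |uh x - ubar x| ≤ β - α := by
          intro x hx
          rw [huh i x hx, abs_sub_le_iff]
          have h1 := hcα i
          have h2 := hcβ i
          rcases (hbb x (hTsub i hx)).2.2 with h3 | h3 <;> rw [h3] <;>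
            constructor <;> linarith
        calc (∫ x in T i, |uh x - ubar x|) ≤ ∫ _ in T i, (β - α) := by
              refine setIntegral_mono_on (hInt.mono_set (Set.subset_iUnion T i))
                (integrableOn_const (hTfin i).ne) (hTmeas i) hb
          _ = (β - α) * (volume (T i)).toReal := by
              rw [setIntegral_const, smul_eq_mul, mul_comm, measureReal_def]
  -- sum up
  have hdisjB : Pairwise (Function.onFun Disjoint fun i => T i ∩ B) :=
    hTdisj.mono fun i j hij => hij.mono Set.inter_subset_left Set.inter_subset_left
  have hmeasB : ∀ i, MeasurableSet (T i ∩ B) := fun i => (hTmeas i).inter hBmeas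
  have hsumEq : (∑' i, volume (T i ∩ B)) = volume (⋃ i, T i ∩ B) :=
    (measure_iUnion hdisjB hmeasB).symm
  have hsumle : (∑' i, volume (T i ∩ B)) ≤ volume B := by
    rw [hsumEq]
    exact measure_mono (Set.iUnion_subset fun i => Set.inter_subset_right)
  have hfinterm : ∀ i, volume (T i ∩ B) ≠ ∞ :=
    fun i => (lt_of_le_of_lt (measure_mono Set.inter_subset_left) (hTfin i)).ne
  have htsumfin : (∑' i, volume (T i ∩ B)) ≠ ∞ :=
    (lt_of_le_of_lt hsumle hBfin.lt_top).ne
  have hsummable : Summable fun i => (volume (T i ∩ B)).toReal :=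
    ENNReal.summable_toReal htsumfin
  have hsum2 : Summable fun i => (β - α) * (volume (T i ∩ B)).toReal :=
    hsummable.mul_left _
  have hsum1 : Summable fun i => ∫ x in T i, |uh x - ubar x| :=
    hsum2.of_nonneg_of_le (fun i => integral_nonneg fun x => abs_nonneg _) key
  -- measure of B
  have hvolB : volume B ≤ ENNReal.ofReal (K * ((Lb : ℝ) * h)) := by
    rcases lt_or_ge 0 ((Lb : ℝ) * h) with hLh | hLh
    · exact hmeasure _ hLh
    · have hLh0 : (Lb : ℝ) * h = 0 := le_antisymm hLh (by positivity)
      have hB0 : volume B = 0 := by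
        refine le_antisymm (ENNReal.le_of_forall_pos_le_add fun ε hε _ => ?_) zero_le
        rw [zero_add]
        have hεK : (0:ℝ) < (ε : ℝ) / K := div_pos (by exact_mod_cast hε) hK
        have h1 : volume B ≤ ENNReal.ofReal (K * ((ε : ℝ) / K)) := by
          refine le_trans (measure_mono ?_) (hmeasure _ hεK)
          intro x hx
          refine ⟨hx.1, ?_⟩
          have h2 := hx.2
          rw [hLh0] at h2
          linarith
        rwa [mul_div_cancel₀ _ hK.ne', ENNReal.ofReal_coe_nnreal] at h1
      rw [hB0]
      exact zero_le
  have hBtoReal : (volume B).toReal ≤ K * ((Lb : ℝ) * h) :=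
    ENNReal.toReal_le_of_le_ofReal (by positivity) hvolB
  calc (∫ x in ⋃ i, T i, |uh x - ubar x|)
      = ∑' i, ∫ x in T i, |uh x - ubar x| := integral_iUnion hTmeas hTdisj hInt
    _ ≤ ∑' i, (β - α) * (volume (T i ∩ B)).toReal := Summable.tsum_le_tsum key hsum1 hsum2
    _ = (β - α) * ∑' i, (volume (T i ∩ B)).toReal := tsum_mul_left
    _ ≤ (β - α) * (volume B).toReal := by
        refine mul_le_mul_of_nonneg_left ?_ hβα
        rw [← ENNReal.tsum_toReal_eq hfinterm]
        exact ENNReal.toReal_mono hBfin hsumle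
    _ ≤ (β - α) * (K * ((Lb : ℝ) * h)) := mul_le_mul_of_nonneg_left hBtoReal hβα
    _ = (β - α) * K * (Lb : ℝ) * h := by ring
end

section
/- L^1 convergence of discretizations of bang-bang controls from weak* convergence: Let (X,B,η) be a finite measure space, ū ∈ U_ad bang-bang (ū ∈ {α,β} a.e.), X_h ⊆ X with η(X\X_h) → 0, and ū_h ∈ L^∞(X_h) with α ≤ ū_h ≤ β a.e. If ū_h ⇀* ū in L^∞(X) in the sense that ∫_{X_h} v ū_h dη → ∫_X v ū dη for all v ∈ L^1(X), then ‖ū_h − ū‖_{L^1(X_h)} → 0. -/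
open MeasureTheory Filter Topology
open scoped ENNReal

/-- for a bang-bang control `ū`, weak* convergence (across the varying domains
`X_h`) of admissible discrete controls `ū_h` to `ū` implies `‖ū_h − ū‖_{L¹(X_h)} → 0`. -/
theorem l1_convergence_of_bang_bang_approx
    {X : Type*} [MeasurableSpace X] (μ : Measure X) [IsFiniteMeasure μ]
    (α β : ℝ) (hαβ : α < β)
    (ubar : X → ℝ) (hubar : ubar ∈ Uad μ α β)
    (hbb : ∀ᵐ x ∂μ, ubar x = α ∨ ubar x = β)
    (A : ℕ → Set X) (hAmeas : ∀ n, MeasurableSet (A n))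
    (hA : Tendsto (fun n => μ (A n)ᶜ) atTop (𝓝 0))
    (un : ℕ → X → ℝ)
    (hun : ∀ n, ∀ᵐ x ∂(μ.restrict (A n)), α ≤ un n x ∧ un n x ≤ β)
    (hweak : ∀ w : X → ℝ, Integrable w μ →
      Tendsto (fun n => ∫ x in A n, w x * un n x ∂μ) atTop (𝓝 (∫ x, w x * ubar x ∂μ))) :
    Tendsto (fun n => ∫ x in A n, |un n x - ubar x| ∂μ) atTop (𝓝 0) := by
  classical
  obtain ⟨hmeas, hbound⟩ := hubar
  set Sa : Set X := ubar ⁻¹' {α} with hSa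
  set Sb : Set X := ubar ⁻¹' {β} with hSb
  have hSam : MeasurableSet Sa := hmeas (measurableSet_singleton α)
  have hSbm : MeasurableSet Sb := hmeas (measurableSet_singleton β)
  set w : X → ℝ := fun x =>
    Sa.indicator (fun _ => (1:ℝ)) x - Sb.indicator (fun _ => (1:ℝ)) x with hw
  have hwmeas : Measurable w :=
    (measurable_const.indicator hSam).sub (measurable_const.indicator hSbm)
  have hwa : ∀ x, ubar x = α → w x = 1 := by
    intro x hx
    have h1 : x ∈ Sa := hx
    have h2 : x ∉ Sb := by
      intro h
      have hβ : ubar x = β := h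
      rw [hx] at hβ
      exact hαβ.ne hβ
    simp [hw, Set.indicator_of_mem h1, Set.indicator_of_notMem h2]
  have hwb : ∀ x, ubar x = β → w x = -1 := by
    intro x hx
    have h1 : x ∉ Sa := by
      intro h
      have hα : ubar x = α := h
      rw [hx] at hα
      exact hαβ.ne' hα
    have h2 : x ∈ Sb := hx
    simp [hw, Set.indicator_of_mem h2, Set.indicator_of_notMem h1]
  have hwabs : ∀ x, |w x| ≤ 1 := by
    intro x
    by_cases h1 : x ∈ Sa <;> by_cases h2 : x ∈ Sb <;>
      simp [hw, Set.indicator_of_mem, Set.indicator_of_notMem, h1, h2]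
  set M : ℝ := max |α| |β| with hMdef
  have hM : ∀ {t : ℝ}, α ≤ t → t ≤ β → |t| ≤ M := by
    intro t h1 h2
    rw [abs_le]
    constructor
    · calc -M ≤ -|α| := neg_le_neg (le_max_left _ _)
        _ ≤ α := neg_abs_le α
        _ ≤ t := h1
    · calc t ≤ β := h2
        _ ≤ |β| := le_abs_self β
        _ ≤ M := le_max_right _ _
  have hub_int : Integrable ubar μ :=
    Integrable.mono' (integrable_const M) hmeas.aestronglyMeasurable
      (hbound.mono fun x hx => by simpa using hM hx.1 hx.2)
  have hwub_int : Integrable (fun x => w x * ubar x) μ :=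
    Integrable.mono' (integrable_const M) (hwmeas.mul hmeas).aestronglyMeasurable
      (hbound.mono fun x hx => by
        have := hM hx.1 hx.2
        calc ‖w x * ubar x‖ = |w x| * |ubar x| := abs_mul _ _
          _ ≤ 1 * M := mul_le_mul (hwabs x) this (abs_nonneg _) zero_le_one
          _ = M := one_mul M)
  have hw_int : Integrable w μ :=
    Integrable.mono' (integrable_const 1) hwmeas.aestronglyMeasurable
      (Eventually.of_forall fun x => by simpa using hwabs x)
  -- pointwise facts
  have fact1 : ∀ x (t : ℝ), (ubar x = α ∨ ubar x = β) → α ≤ t → t ≤ β →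
      w x * t - w x * ubar x = |t - ubar x| := by
    intro x t hx h1 h2
    rcases hx with h | h
    · rw [hwa x h, h, one_mul, one_mul, abs_of_nonneg (sub_nonneg.2 h1)]
    · rw [hwb x h, h, neg_one_mul, neg_one_mul, abs_of_nonpos (sub_nonpos.2 h2)]; ring
  have fact2 : ∀ x (t : ℝ), (ubar x = α ∨ ubar x = β) → α ≤ t → t ≤ β →
      ubar x + w x * |t - ubar x| = t := by
    intro x t hx h1 h2
    rcases hx with h | h
    · rw [hwa x h, h, abs_of_nonneg (sub_nonneg.2 h1)]; ring
    · rw [hwb x h, h, abs_of_nonpos (sub_nonpos.2 h2)]; ring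
  have fact3 : ∀ x (t : ℝ), (ubar x = α ∨ ubar x = β) → w x * (w x * t) = t := by
    intro x t hx
    rcases hx with h | h
    · rw [hwa x h]; ring
    · rw [hwb x h]; ring
  -- key inequality
  have key : ∀ n, ∫ x in A n, |un n x - ubar x| ∂μ ≤
      |(∫ x in A n, w x * un n x ∂μ) - ∫ x in A n, w x * ubar x ∂μ| := by
    intro n
    have hae : ∀ᵐ x ∂(μ.restrict (A n)),
        (ubar x = α ∨ ubar x = β) ∧ (α ≤ un n x ∧ un n x ≤ β) :=
      (ae_restrict_of_ae hbb).and (hun n)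
    by_cases hsm : AEStronglyMeasurable (un n) (μ.restrict (A n))
    · have hint_un : Integrable (fun x => w x * un n x) (μ.restrict (A n)) := by
        refine Integrable.mono' (integrable_const M)
          (hwmeas.aestronglyMeasurable.mul hsm) (hae.mono fun x hx => ?_)
        have := hM hx.2.1 hx.2.2
        calc ‖w x * un n x‖ = |w x| * |un n x| := abs_mul _ _
          _ ≤ 1 * M := mul_le_mul (hwabs x) this (abs_nonneg _) zero_le_one
          _ = M := one_mul M
      have heq : (fun x => |un n x - ubar x|) =ᵐ[μ.restrict (A n)]
          fun x => w x * un n x - w x * ubar x :=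
        hae.mono fun x hx => (fact1 x (un n x) hx.1 hx.2.1 hx.2.2).symm
      rw [integral_congr_ae heq, integral_sub hint_un hwub_int.restrict]
      exact le_abs_self _
    · have h1 : ¬ Integrable (fun x => |un n x - ubar x|) (μ.restrict (A n)) := by
        intro h
        apply hsm
        have heq : un n =ᵐ[μ.restrict (A n)]
            fun x => ubar x + w x * |un n x - ubar x| :=
          hae.mono fun x hx => (fact2 x (un n x) hx.1 hx.2.1 hx.2.2).symm
        exact (hmeas.aestronglyMeasurable.add
          (hwmeas.aestronglyMeasurable.mul h.aestronglyMeasurable)).congr heq.symm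
      have h2 : ¬ Integrable (fun x => w x * un n x) (μ.restrict (A n)) := by
        intro h
        apply hsm
        have heq : un n =ᵐ[μ.restrict (A n)]
            fun x => w x * (w x * un n x) :=
          hae.mono fun x hx => (fact3 x (un n x) hx.1).symm
        obtain ⟨g, hgm, hgae⟩ := h.aestronglyMeasurable
        have haesm : AEStronglyMeasurable (fun x => w x * (w x * un n x))
            (μ.restrict (A n)) :=
          ⟨fun x => w x * g x, hwmeas.stronglyMeasurable.mul hgm,
            hgae.mono fun x hx => by
              have hx' : w x * un n x = g x := hx
              show w x * (w x * un n x) = w x * g x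
              rw [hx']⟩
        exact haesm.congr heq.symm
      rw [integral_undef h1, integral_undef h2]
      positivity
  -- convergence of the domain integrals of w * ubar
  have htoReal : Tendsto (fun n => (μ (A n)ᶜ).toReal) atTop (𝓝 0) := by
    have := (ENNReal.tendsto_toReal (by simp : (0:ℝ≥0∞) ≠ ∞)).comp hA
    exact this
  have hsmall : Tendsto (fun n => ∫ x in (A n)ᶜ, w x * ubar x ∂μ) atTop (𝓝 0) := by
    apply squeeze_zero_norm (a := fun n => M * (μ (A n)ᶜ).toReal)
    · intro n
      have hb : ∀ᵐ x ∂(μ.restrict (A n)ᶜ), ‖w x * ubar x‖ ≤ M := by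
        refine ae_restrict_of_ae (hbound.mono fun x hx => ?_)
        have := hM hx.1 hx.2
        calc ‖w x * ubar x‖ = |w x| * |ubar x| := abs_mul _ _
          _ ≤ 1 * M := mul_le_mul (hwabs x) this (abs_nonneg _) zero_le_one
          _ = M := one_mul M
      have := norm_integral_le_of_norm_le_const (μ := μ.restrict (A n)ᶜ) hb
      simpa [Measure.restrict_apply_univ, Measure.real] using this
    · simpa using htoReal.const_mul M
  have hd : Tendsto (fun n => ∫ x in A n, w x * ubar x ∂μ) atTop
      (𝓝 (∫ x, w x * ubar x ∂μ)) := by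
    have hrepr : ∀ n, ∫ x in A n, w x * ubar x ∂μ =
        (∫ x, w x * ubar x ∂μ) - ∫ x in (A n)ᶜ, w x * ubar x ∂μ := by
      intro n
      rw [← integral_add_compl (hAmeas n) hwub_int]
      ring
    simp only [hrepr]
    simpa using (tendsto_const_nhds (x := ∫ x, w x * ubar x ∂μ)).sub hsmall
  have hc : Tendsto (fun n =>
      (∫ x in A n, w x * un n x ∂μ) - ∫ x in A n, w x * ubar x ∂μ) atTop (𝓝 0) := by
    simpa using (hweak w hw_int).sub hd
  refine squeeze_zero (fun n => integral_nonneg fun x => abs_nonneg _) key ?_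
  simpa using hc.abs
end
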